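/- arXiv:1204.5537 — 7 statements merged into one kernel-verified Lean document; each statement's English description precedes it below -/
import Mathlib

section
/- A non-negative integer vector (b_k,...,b_1) belongs to Ξ_k if and only if there exists a unique index k* ∈ {1,...,k} such that: (c1) b_k + ... + b_{k'} + k' < k+1 for all k' with k ≥ k' > k*; (c2) b_k + ... + b_{k*} + k* = k+1; (c3) b_k + ... + b_{k'} + k' < k+1 for all k' with k* > k' ≥ 1; and (c4) b_{k*-1} = b_{k*-2} = ... = b_1 = 0. -/
open Finset

/-- `sumFrom b k'` is `b_k + b_{k-1} + ⋯ + b_{k'}`, where the `Fin k`-index `j`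
encodes the subscript `j+1` (so `b ⟨0,_⟩ = b₁`, …, `b ⟨k-1,_⟩ = b_k`). -/
def sumFrom {k : ℕ} (b : Fin k → ℕ) (k' : ℕ) : ℕ :=
  ∑ ℓ : Fin k, if k' ≤ ℓ.val + 1 then b ℓ else 0

/-- The set `Ξ̂_k` of non-negative integer vectors `(b_k, …, b_1)` with
`b_k + ⋯ + b_{k'} + k' ≤ k + 1` for all `1 ≤ k' ≤ k` and total sum at least `1`. -/
def XiHat (k : ℕ) : Set (Fin k → ℕ) :=
  {b | (∀ k', 1 ≤ k' → k' ≤ k → sumFrom b k' + k' ≤ k + 1) ∧ 1 ≤ ∑ ℓ, b ℓ}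

/-- `Ξ_k`: vectors of `Ξ̂_k` having no proper left truncated subvector
`(b_{k'}, …, b_1)` in `Ξ̂_{k'}` for any `k' < k`. -/
def Xi (k : ℕ) : Set (Fin k → ℕ) :=
  {b | b ∈ XiHat k ∧
    ∀ k' (h : k' < k), (fun j : Fin k' => b (Fin.castLE h.le j)) ∉ XiHat k'}

def Bf {k : ℕ} (b : Fin k → ℕ) : ℕ → ℕ := fun i => if h : i < k then b ⟨i, h⟩ else 0

lemma sumFrom_eq_Ico {k : ℕ} (b : Fin k → ℕ) (j : ℕ) :
    sumFrom b j = ∑ i ∈ Finset.Ico (j-1) k, Bf b i := by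
  unfold sumFrom
  have h1 : ∀ ℓ : Fin k, (if j ≤ ℓ.val + 1 then b ℓ else 0)
      = (fun i : ℕ => if j ≤ i + 1 then Bf b i else 0) ℓ.val := by
    intro ℓ
    simp only [Bf, ℓ.isLt, dif_pos, Fin.eta]
  rw [Finset.sum_congr rfl (fun ℓ _ => h1 ℓ),
    Fin.sum_univ_eq_sum_range (fun i : ℕ => if j ≤ i + 1 then Bf b i else 0) k,
    ← Finset.sum_filter]
  congr 1
  ext i
  simp only [Finset.mem_filter, Finset.mem_range, Finset.mem_Ico]
  omega

lemma sumFrom_trunc {k : ℕ} (b : Fin k → ℕ) {m : ℕ} (h : m ≤ k) (j : ℕ) :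
    sumFrom (fun i : Fin m => b (Fin.castLE h i)) j = ∑ i ∈ Finset.Ico (j-1) m, Bf b i := by
  rw [sumFrom_eq_Ico]
  refine Finset.sum_congr rfl fun i hi => ?_
  have him : i < m := (Finset.mem_Ico.1 hi).2
  simp only [Bf, him, dif_pos, lt_of_lt_of_le him h]
  rfl

lemma sumFrom_one' {k : ℕ} (b : Fin k → ℕ) : sumFrom b 1 = ∑ ℓ, b ℓ := by
  unfold sumFrom
  exact Finset.sum_congr rfl fun ℓ _ => if_pos (by omega)

lemma total_eq_Ico {k : ℕ} (b : Fin k → ℕ) : (∑ ℓ, b ℓ) = ∑ i ∈ Finset.Ico 0 k, Bf b i := by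
  rw [← sumFrom_one', sumFrom_eq_Ico]

/-- A non-negative integer vector `(b_k, …, b_1)` belongs to `Ξ_k` iff there is a
unique index `k* ∈ {1,…,k}` with:
(c1) `b_k + ⋯ + b_{k'} + k' < k+1` for all `k ≥ k' > k*`,
(c2) `b_k + ⋯ + b_{k*} + k* = k+1`,
(c3) `b_k + ⋯ + b_{k'} + k' < k+1` for all `k* > k' ≥ 1`,
(c4) `b_{k*-1} = ⋯ = b_1 = 0`. -/
theorem mem_Xi_iff_exists_unique_apex (k : ℕ) (hk : 1 ≤ k) (b : Fin k → ℕ) :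
    b ∈ Xi k ↔
      ∃! ks : ℕ, 1 ≤ ks ∧ ks ≤ k ∧
        (∀ k', ks < k' → k' ≤ k → sumFrom b k' + k' < k + 1) ∧
        sumFrom b ks + ks = k + 1 ∧
        (∀ k', 1 ≤ k' → k' < ks → sumFrom b k' + k' < k + 1) ∧
        (∀ j : Fin k, j.val + 1 < ks → b j = 0) := by
  classical
  have hsplit : ∀ a m : ℕ, a ≤ m → m ≤ k →
      (∑ i ∈ Finset.Ico a m, Bf b i) + ∑ i ∈ Finset.Ico m k, Bf b i
        = ∑ i ∈ Finset.Ico a k, Bf b i :=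
    fun a m h1 h2 => Finset.sum_Ico_consecutive _ h1 h2
  constructor
  · rintro ⟨⟨hle, hsum⟩, hnot⟩
    rw [total_eq_Ico] at hsum
    -- existence of an index achieving k+1
    have hex : ∃ j, 1 ≤ j ∧ j ≤ k ∧ sumFrom b j + j = k + 1 := by
      by_contra hcon
      push_neg at hcon
      have hlt : ∀ j, 1 ≤ j → j ≤ k → sumFrom b j + j ≤ k := by
        intro j h1 h2
        have := hle j h1 h2
        have := hcon j h1 h2
        omega
      rcases Nat.lt_or_ge 1 k with hk2 | hk1
      · -- k ≥ 2
        have hBk : Bf b (k-1) = 0 := by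
          have h1 := hlt k hk le_rfl
          rw [sumFrom_eq_Ico] at h1
          have h2 : Finset.Ico (k-1) k = {k-1} := by
            ext i; simp only [Finset.mem_Ico, Finset.mem_singleton]; omega
          rw [h2, Finset.sum_singleton] at h1
          omega
        have hIkk : ∑ i ∈ Finset.Ico (k-1) k, Bf b i = 0 := by
          have h2 : Finset.Ico (k-1) k = {k-1} := by
            ext i; simp only [Finset.mem_Ico, Finset.mem_singleton]; omega
          rw [h2, Finset.sum_singleton, hBk]
        refine hnot (k-1) (by omega) ⟨?_, ?_⟩
        · intro j hj1 hj2
          rw [sumFrom_trunc b (by omega : k - 1 ≤ k) j]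
          have h3 := hsplit (j-1) (k-1) (by omega) (by omega)
          have h4 := hlt j hj1 (by omega)
          rw [sumFrom_eq_Ico] at h4
          omega
        · rw [total_eq_Ico]
          have h3 := hsplit 0 (k-1) (by omega) (by omega)
          have h5 : ∑ i ∈ Finset.Ico 0 (k-1),
              Bf (fun i : Fin (k-1) => b (Fin.castLE (by omega : k - 1 ≤ k) i)) i
              = ∑ i ∈ Finset.Ico 0 (k-1), Bf b i := by
            refine Finset.sum_congr rfl fun i hi => ?_
            have him : i < k - 1 := (Finset.mem_Ico.1 hi).2
            simp only [Bf, him, dif_pos, lt_of_lt_of_le him (by omega : k - 1 ≤ k)]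
            rfl
          rw [h5]
          omega
      · -- k = 1
        have h1 := hlt 1 le_rfl hk
        rw [sumFrom_eq_Ico] at h1
        have hk1' : k = 1 := by omega
        subst hk1'
        simp only [Nat.sub_self] at h1
        omega
    obtain ⟨j0, hj01, hj0k, hj0eq⟩ := hex
    set P : ℕ → Prop := fun j => 1 ≤ j ∧ sumFrom b j + j = k + 1 with hP
    set ks := Nat.findGreatest P k with hksdef
    have hPks : P ks := Nat.findGreatest_spec hj0k ⟨hj01, hj0eq⟩
    have hks1 : 1 ≤ ks := hPks.1
    have hksk : ks ≤ k := Nat.findGreatest_le k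
    have hc2 : sumFrom b ks + ks = k + 1 := hPks.2
    have hc1 : ∀ k', ks < k' → k' ≤ k → sumFrom b k' + k' < k + 1 := by
      intro k' h1 h2
      have h3 := hle k' (by omega) h2
      have h4 : ¬ P k' := Nat.findGreatest_is_greatest h1 h2
      simp only [hP, not_and] at h4
      have := h4 (by omega)
      omega
    have hzero : ∀ i ∈ Finset.Ico 0 (ks-1), Bf b i = 0 := by
      by_contra hcon
      push_neg at hcon
      obtain ⟨i0, hi0mem, hi0ne⟩ := hcon
      have hi0 : i0 < ks - 1 := (Finset.mem_Ico.1 hi0mem).2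
      have hks2 : 2 ≤ ks := by omega
      have hpos : 0 < ∑ i ∈ Finset.Ico 0 (ks-1), Bf b i :=
        Finset.sum_pos' (fun _ _ => Nat.zero_le _) ⟨i0, hi0mem, Nat.pos_of_ne_zero hi0ne⟩
      refine hnot (ks-1) (by omega) ⟨?_, ?_⟩
      · intro j hj1 hj2
        rw [sumFrom_trunc b (by omega : ks - 1 ≤ k) j]
        have h3 := hsplit (j-1) (ks-1) (by omega) (by omega)
        have h4 := hle j hj1 (by omega)
        rw [sumFrom_eq_Ico] at h4
        have h6 : sumFrom b ks = ∑ i ∈ Finset.Ico (ks-1) k, Bf b i := sumFrom_eq_Ico b ks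
        omega
      · rw [total_eq_Ico]
        have h5 : ∑ i ∈ Finset.Ico 0 (ks-1),
            Bf (fun i : Fin (ks-1) => b (Fin.castLE (by omega : ks - 1 ≤ k) i)) i
            = ∑ i ∈ Finset.Ico 0 (ks-1), Bf b i := by
          refine Finset.sum_congr rfl fun i hi => ?_
          have him : i < ks - 1 := (Finset.mem_Ico.1 hi).2
          simp only [Bf, him, dif_pos, lt_of_lt_of_le him (by omega : ks - 1 ≤ k)]
          rfl
        rw [h5]
        omega
    have hc4 : ∀ j : Fin k, j.val + 1 < ks → b j = 0 := by
      intro j hj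
      have := hzero j.val (Finset.mem_Ico.2 ⟨Nat.zero_le _, by omega⟩)
      simpa only [Bf, j.isLt, dif_pos, Fin.eta] using this
    have hc3 : ∀ k', 1 ≤ k' → k' < ks → sumFrom b k' + k' < k + 1 := by
      intro k' h1 h2
      have h3 := hsplit (k'-1) (ks-1) (by omega) (by omega)
      have h4 : ∑ i ∈ Finset.Ico (k'-1) (ks-1), Bf b i = 0 :=
        Finset.sum_eq_zero fun i hi => hzero i
          (Finset.mem_Ico.2 ⟨Nat.zero_le _, (Finset.mem_Ico.1 hi).2⟩)
      have h6 : sumFrom b ks = ∑ i ∈ Finset.Ico (ks-1) k, Bf b i := sumFrom_eq_Ico b ks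
      rw [sumFrom_eq_Ico]
      omega
    refine ⟨ks, ⟨hks1, hksk, hc1, hc2, hc3, hc4⟩, ?_⟩
    rintro y ⟨hy1, hyk, hyc1, hyc2, hyc3, hyc4⟩
    rcases Nat.lt_trichotomy y ks with h | h | h
    · have := hyc1 ks h hksk; omega
    · exact h
    · have := hyc3 ks hks1 h; omega
  · rintro ⟨ks, ⟨hks1, hksk, hc1, hc2, hc3, hc4⟩, -⟩
    have hzero : ∀ i ∈ Finset.Ico 0 (ks-1), Bf b i = 0 := by
      intro i hi
      have him : i < ks - 1 := (Finset.mem_Ico.1 hi).2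
      have hik : i < k := by omega
      have := hc4 ⟨i, hik⟩ (by simpa using by omega : (⟨i, hik⟩ : Fin k).val + 1 < ks)
      simpa only [Bf, hik, dif_pos] using this
    have h6 : sumFrom b ks = ∑ i ∈ Finset.Ico (ks-1) k, Bf b i := sumFrom_eq_Ico b ks
    refine ⟨⟨?_, ?_⟩, ?_⟩
    · intro k' h1 h2
      rcases Nat.lt_trichotomy k' ks with h | h | h
      · exact (hc3 k' h1 h).le
      · subst h; omega
      · exact (hc1 k' h h2).le
    · rw [total_eq_Ico]
      have h3 := hsplit 0 (ks-1) (by omega) (by omega)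
      have h4 : ∑ i ∈ Finset.Ico 0 (ks-1), Bf b i = 0 := Finset.sum_eq_zero hzero
      omega
    · intro m hm hmem
      obtain ⟨htr, htsum⟩ := hmem
      rcases le_or_gt ks m with hcase | hcase
      · have h5 := htr ks hks1 hcase
        rw [sumFrom_trunc b hm.le ks] at h5
        have h3 := hsplit (ks-1) m (by omega) hm.le
        have h7 := hc1 (m+1) (by omega) (by omega)
        rw [sumFrom_eq_Ico] at h7
        simp only [Nat.add_sub_cancel] at h7
        omega
      · rw [← sumFrom_one', sumFrom_trunc b hm.le 1] at htsum
        have h4 : ∑ i ∈ Finset.Ico (1-1) m, Bf b i = 0 :=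
          Finset.sum_eq_zero fun i hi => hzero i
            (Finset.mem_Ico.2 ⟨Nat.zero_le _, by
              have := (Finset.mem_Ico.1 hi).2; omega⟩)
        omega
end

section
/- A non-negative integer vector (b_k,...,b_1) corresponds to a directed path of length k on G_m starting from vertex (k,k) (via b_{k'} = c_{k'} − c_{k'-1}) if and only if it satisfies b_k + b_{k-1} + ... + b_{k'} + k' ≤ k + 1 for every k' with k ≥ k' ≥ 1. -/
open Finset

/-- A non-negative integer vector `(b_k,…,b_1)` corresponds to a directed path of
length `k` on `G_m` starting from vertex `(k,k)` (via `b_{k'} = c_{k'} − c_{k'-1}`,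
where the path visits vertices `(ℓ, c_ℓ)`, `ℓ = k, k-1, …, 0`) iff it satisfies
`b_k + ⋯ + b_{k'} + k' ≤ k + 1` for every `1 ≤ k' ≤ k`. -/
theorem path_iff_partial_sums (m k : ℕ) (hk : k ≤ m) (b : Fin k → ℕ) :
    (∃ c : ℕ → ℕ, c k = k ∧ (∀ ℓ ≤ k, ℓ ≤ c ℓ ∧ c ℓ ≤ m) ∧
        (∀ ℓ < k, c ℓ ≤ c (ℓ + 1)) ∧
        (∀ j : Fin k, b j = c (j.val + 1) - c j.val)) ↔
      (∀ k', 1 ≤ k' → k' ≤ k → sumFrom b k' + k' ≤ k + 1) := by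

  classical
  set S : ℕ → ℕ := fun ℓ => ∑ j : Fin k, if ℓ ≤ j.val then b j else 0 with hSdef
  have hSk : ∀ ℓ, k ≤ ℓ → S ℓ = 0 := by
    intro ℓ hℓ
    refine Finset.sum_eq_zero fun j _ => ?_
    rw [if_neg]
    have := j.isLt
    omega
  have hsplit : ∀ ℓ (h : ℓ < k), S ℓ = b ⟨ℓ, h⟩ + S (ℓ + 1) := by
    intro ℓ h
    have h1 : S ℓ = ∑ j : Fin k,
        ((if j = ⟨ℓ, h⟩ then b j else 0) + (if ℓ + 1 ≤ j.val then b j else 0)) := by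
      refine Finset.sum_congr rfl fun j _ => ?_
      by_cases hj : j = ⟨ℓ, h⟩
      · subst hj; simp
      · have hj' : j.val ≠ ℓ := fun hc => hj (Fin.ext hc)
        rw [if_neg hj]
        by_cases h2 : ℓ + 1 ≤ j.val
        · rw [if_pos h2, if_pos (by omega), Nat.zero_add]
        · rw [if_neg h2, if_neg (by omega), Nat.zero_add]
    rw [h1, Finset.sum_add_distrib]
    congr 1
    simp
  have hsf : ∀ ℓ, sumFrom b (ℓ + 1) = S ℓ := by
    intro ℓ
    refine Finset.sum_congr rfl fun j _ => ?_
    simp [Nat.add_le_add_iff_right]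
  constructor
  · rintro ⟨c, hck, hbound, hmono, hb⟩ k' h1 h2
    have key : ∀ d ℓ, ℓ + d = k → c ℓ + S ℓ = k := by
      intro d
      induction d with
      | zero =>
        intro ℓ hℓ
        have he : ℓ = k := by omega
        rw [he, hck, hSk k le_rfl]
        omega
      | succ n ih =>
        intro ℓ hℓ
        have hℓk : ℓ < k := by omega
        have h3 := hsplit ℓ hℓk
        have h4 := hb ⟨ℓ, hℓk⟩
        have h5 := hmono ℓ hℓk
        have h6 := ih (ℓ + 1) (by omega)
        simp only at h3 h4
        omega
    obtain ⟨ℓ, rfl⟩ : ∃ ℓ, k' = ℓ + 1 := ⟨k' - 1, by omega⟩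
    rw [hsf]
    have h7 := key (k - ℓ) ℓ (by omega)
    have h8 := (hbound ℓ (by omega)).1
    omega
  · intro h
    have hSb : ∀ ℓ, ℓ ≤ k → S ℓ + ℓ ≤ k := by
      intro ℓ hℓ
      rcases eq_or_lt_of_le hℓ with rfl | hℓ'
      · rw [hSk ℓ le_rfl]; omega
      · have := h (ℓ + 1) (by omega) (by omega)
        rw [hsf] at this
        omega
    have hanti : ∀ ℓ, S (ℓ + 1) ≤ S ℓ := by
      intro ℓ
      by_cases hℓ : ℓ < k
      · rw [hsplit ℓ hℓ]; omega
      · rw [hSk ℓ (by omega), hSk (ℓ + 1) (by omega)]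
    refine ⟨fun ℓ => k - S ℓ, ?_, ?_, ?_, ?_⟩
    · show k - S k = k
      rw [hSk k le_rfl]
      omega
    · intro ℓ hℓ
      show ℓ ≤ k - S ℓ ∧ k - S ℓ ≤ m
      have := hSb ℓ hℓ
      omega
    · intro ℓ hℓ
      show k - S ℓ ≤ k - S (ℓ + 1)
      have h1 := hanti ℓ
      have h2 := hSb ℓ (by omega)
      omega
    · intro j
      show b j = (k - S (j.val + 1)) - (k - S j.val)
      have h1 := hsplit j.val j.isLt
      have h2 := hSb j.val (le_of_lt j.isLt)
      simp only [Fin.eta] at h1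
      omega
end

section
/- With γ defined as path-weight sums in G_m, the solution of the equation system satisfies the recurrence λ_k = 1 − γ(k−1, k) = γ(k−1, k−1) − γ(k−1, k) for each k ≥ 2, with λ_1 = 1, and consequently λ_k > 0 for all k. -/
open Finset

/-- The equality system `∑_{(b_k,…,b_1) ∈ Ξ_k} ∏_j λ_j^{b_j}/b_j! = 1` for `k = 1, …, m`. -/
def eqSystem (m : ℕ) (lam : ℕ → ℝ) : Prop :=
  ∀ k, 1 ≤ k → k ≤ m →
    ∑ᶠ b ∈ Xi k, ∏ j : Fin k, lam (j.val + 1) ^ (b j) / (Nat.factorial (b j)) = 1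

/-- `gamma lam k k'` is the total weight of directed paths on `G_m` from `(k,k')`
to `(0,0)`, where an edge from `(ℓ+1, c)` to `(ℓ, c'')` (with `c ≥ c''`) has
weight `λ_{ℓ+1}^{c-c''}/(c-c'')!` and `gamma lam 0 0 = 1`. -/
noncomputable def gamma (lam : ℕ → ℝ) : ℕ → ℕ → ℝ
  | 0, 0 => 1
  | 0, _ + 1 => 0
  | k + 1, k' =>
      ∑ c ∈ Finset.Icc k k',
        lam (k + 1) ^ (k' - c) / (Nat.factorial (k' - c)) * gamma lam k c

namespace LamAux

/-- extension of a vector `Fin K → ℕ` to all of `ℕ` by zero -/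
def bex {K : ℕ} (b : Fin K → ℕ) : ℕ → ℕ := fun i => if h : i < K then b ⟨i, h⟩ else 0

lemma bex_lt {K : ℕ} (b : Fin K → ℕ) (ℓ : Fin K) : bex b ℓ.val = b ℓ := by
  simp [bex, ℓ.isLt]

lemma bex_ge {K : ℕ} (b : Fin K → ℕ) (i : ℕ) (h : K ≤ i) : bex b i = 0 := by
  simp [bex, Nat.not_lt.2 h]

lemma sum_univ_eq {K : ℕ} (b : Fin K → ℕ) : ∑ ℓ, b ℓ = ∑ i ∈ Finset.range K, bex b i := by
  rw [← Fin.sum_univ_eq_sum_range (bex b) K]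
  exact Finset.sum_congr rfl fun ℓ _ => (bex_lt b ℓ).symm

lemma sumFrom_eq {K : ℕ} (b : Fin K → ℕ) (j : ℕ) :
    sumFrom b j = ∑ i ∈ Finset.Ico (j - 1) K, bex b i := by
  have h1 : sumFrom b j = ∑ i ∈ Finset.range K, (if j ≤ i + 1 then bex b i else 0) := by
    rw [← Fin.sum_univ_eq_sum_range (fun i => if j ≤ i + 1 then bex b i else 0) K]
    exact Finset.sum_congr rfl fun ℓ _ => by rw [bex_lt]
  rw [h1, ← Finset.sum_filter]
  apply Finset.sum_congr _ (fun _ _ => rfl)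
  ext i
  simp only [Finset.mem_filter, Finset.mem_range, Finset.mem_Ico]
  omega

variable (lam : ℕ → ℝ)

/-- the weight of a vector -/
noncomputable def wt (K : ℕ) (b : Fin K → ℕ) : ℝ :=
  ∏ j : Fin K, lam (j.val + 1) ^ (b j) / (Nat.factorial (b j))

/-- ℕ-land weight factor -/
noncomputable def wf (g : ℕ → ℕ) (i : ℕ) : ℝ := lam (i + 1) ^ (g i) / (Nat.factorial (g i))

lemma wt_eq {K : ℕ} (b : Fin K → ℕ) : wt lam K b = ∏ i ∈ Finset.range K, wf lam (bex b) i := by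
  rw [wt, ← Fin.prod_univ_eq_prod_range (wf lam (bex b)) K]
  exact Finset.prod_congr rfl fun ℓ _ => by rw [wf, bex_lt]

lemma wf_zero (g : ℕ → ℕ) (i : ℕ) (h : g i = 0) : wf lam g i = 1 := by
  simp [wf, h]

lemma wf_congr {g g' : ℕ → ℕ} (i : ℕ) (h : g i = g' i) : wf lam g i = wf lam g' i := by
  simp [wf, h]

lemma coord_le_sum {K : ℕ} (b : Fin K → ℕ) (ℓ : Fin K) : b ℓ ≤ ∑ i, b i :=
  Finset.single_le_sum (fun i _ => Nat.zero_le (b i)) (Finset.mem_univ ℓ)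

lemma finite_bdd {K : ℕ} {S : Set (Fin K → ℕ)} (N : ℕ) (h : ∀ b ∈ S, ∀ ℓ, b ℓ ≤ N) :
    S.Finite := by
  apply Set.Finite.subset (Set.finite_Icc (fun _ : Fin K => 0) (fun _ => N))
  intro b hb
  exact Set.mem_Icc.2 ⟨Pi.le_def.2 fun ℓ => Nat.zero_le _, Pi.le_def.2 fun ℓ => h b hb ℓ⟩

/-- the set of vectors underlying `gamma n N` -/
def Vset (n N : ℕ) : Set (Fin n → ℕ) :=
  {b | n ≤ N ∧ (∑ ℓ, b ℓ) = N ∧ ∀ j, 1 ≤ j → j ≤ n → sumFrom b j + j ≤ N + 1}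

lemma Vset_finite (n N : ℕ) : (Vset n N).Finite :=
  finite_bdd N (fun b hb ℓ => le_trans (coord_le_sum b ℓ) (le_of_eq hb.2.1))

noncomputable def Vfin (n N : ℕ) : Finset (Fin n → ℕ) := (Vset_finite n N).toFinset

lemma mem_Vfin {n N : ℕ} {b : Fin n → ℕ} : b ∈ Vfin n N ↔
    n ≤ N ∧ (∑ i ∈ Finset.range n, bex b i) = N ∧
      ∀ j, 1 ≤ j → j ≤ n → (∑ i ∈ Finset.Ico (j - 1) n, bex b i) + j ≤ N + 1 := by
  rw [Vfin, Set.Finite.mem_toFinset]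
  show (n ≤ N ∧ _ ∧ _) ↔ _
  rw [sum_univ_eq]
  constructor
  · rintro ⟨h1, h2, h3⟩
    exact ⟨h1, h2, fun j hj1 hj2 => by rw [← sumFrom_eq]; exact h3 j hj1 hj2⟩
  · rintro ⟨h1, h2, h3⟩
    exact ⟨h1, h2, fun j hj1 hj2 => by rw [sumFrom_eq]; exact h3 j hj1 hj2⟩

lemma gamma_zero_zero : gamma lam 0 0 = 1 := rfl

lemma gamma_zero_succ (N : ℕ) : gamma lam 0 (N + 1) = 0 := rfl

lemma gamma_succ (n N : ℕ) : gamma lam (n + 1) N =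
    ∑ c ∈ Finset.Icc n N,
      lam (n + 1) ^ (N - c) / (Nat.factorial (N - c)) * gamma lam n c := rfl

lemma bex_init {n : ℕ} (b : Fin (n + 1) → ℕ) (i : ℕ) (h : i < n) :
    bex (Fin.init b) i = bex b i := by
  have h' : i < n + 1 := Nat.lt_succ_of_lt h
  simp only [bex, dif_pos h, dif_pos h']
  show b (Fin.castSucc ⟨i, h⟩) = b ⟨i, h'⟩
  congr 1

lemma bex_last {n : ℕ} (b : Fin (n + 1) → ℕ) : bex b n = b (Fin.last n) := by
  have := bex_lt b (Fin.last n); exact this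

lemma gamma_eq_sum : ∀ n N, n ≤ N → gamma lam n N = ∑ b ∈ Vfin n N, wt lam n b := by
  intro n
  induction n with
  | zero =>
    intro N _
    cases N with
    | zero =>
      have hV : Vfin 0 0 = {fun i : Fin 0 => 0} := by
        ext b
        simp only [mem_Vfin, Finset.mem_singleton]
        constructor
        · intro _; exact funext fun i => i.elim0
        · intro hb; subst hb; refine ⟨le_refl _, by simp, fun j hj1 hj2 => by omega⟩
      rw [hV, Finset.sum_singleton, gamma_zero_zero, wt]
      simp
    | succ N =>
      have hV : Vfin 0 (N + 1) = ∅ := by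
        ext b
        simp only [mem_Vfin, Finset.notMem_empty, iff_false, not_and]
        intro _ h
        simp at h
      rw [hV, Finset.sum_empty, gamma_zero_succ]
  | succ n IH =>
    intro N hN
    rw [gamma_succ]
    have hmaps : ∀ b ∈ Vfin (n + 1) N, N - b (Fin.last n) ∈ Finset.Icc n N := by
      intro b hb
      rw [mem_Vfin] at hb
      obtain ⟨h1, h2, h3⟩ := hb
      have hc := h3 (n + 1) (by omega) (le_refl _)
      have : (∑ i ∈ Finset.Ico n (n + 1), bex b i) = bex b n := by
        rw [Finset.sum_Ico_succ_top (le_refl n), Finset.Ico_self, Finset.sum_empty, zero_add]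
      rw [show (n + 1 - 1) = n from rfl, this] at hc
      rw [bex_last] at hc
      simp only [Finset.mem_Icc]
      omega
    rw [← Finset.sum_fiberwise_of_maps_to hmaps (wt lam (n + 1))]
    apply Finset.sum_congr rfl
    intro c hc
    rw [Finset.mem_Icc] at hc
    rw [IH c hc.1, Finset.mul_sum]
    symm
    apply Finset.sum_nbij' (i := fun b => Fin.init b)
      (j := fun a => (Fin.snoc a (N - c) : Fin (n + 1) → ℕ))
    · -- membership forward
      intro b hb
      rw [Finset.mem_filter] at hb
      obtain ⟨hb, hfib⟩ := hb
      rw [mem_Vfin] at hb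
      obtain ⟨h1, h2, h3⟩ := hb
      have hble : bex b n ≤ N := by
        rw [← h2]
        exact Finset.single_le_sum (fun i _ => Nat.zero_le _) (by simp)
      have hbl := bex_last b
      have hlast : bex b n = N - c := by omega
      rw [mem_Vfin]
      have hsum : (∑ i ∈ Finset.range n, bex (Fin.init b) i) = c := by
        have : (∑ i ∈ Finset.range n, bex (Fin.init b) i)
            = ∑ i ∈ Finset.range n, bex b i :=
          Finset.sum_congr rfl fun i hi => bex_init b i (Finset.mem_range.1 hi)
        rw [this]
        have h2' := h2
        rw [Finset.sum_range_succ] at h2'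
        omega
      refine ⟨hc.1, hsum, fun j hj1 hj2 => ?_⟩
      have hcond := h3 j hj1 (by omega)
      have hsplit : (∑ i ∈ Finset.Ico (j - 1) (n + 1), bex b i)
          = (∑ i ∈ Finset.Ico (j - 1) n, bex b i) + bex b n := by
        rw [Finset.sum_Ico_succ_top (by omega)]
      have hIco : (∑ i ∈ Finset.Ico (j - 1) n, bex (Fin.init b) i)
          = ∑ i ∈ Finset.Ico (j - 1) n, bex b i :=
        Finset.sum_congr rfl fun i hi => bex_init b i (Finset.mem_Ico.1 hi).2
      rw [hIco]
      omega
    · -- membership backward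
      intro a ha
      rw [mem_Vfin] at ha
      obtain ⟨h1, h2, h3⟩ := ha
      have hbexlt : ∀ i, i < n → bex (Fin.snoc a (N - c) : Fin (n+1) → ℕ) i = bex a i := by
        intro i hi
        have h' : i < n + 1 := Nat.lt_succ_of_lt hi
        simp only [bex, dif_pos hi, dif_pos h']
        show (Fin.snoc a (N - c) : Fin (n+1) → ℕ) ⟨i, h'⟩ = a ⟨i, hi⟩
        have : (⟨i, h'⟩ : Fin (n+1)) = Fin.castSucc ⟨i, hi⟩ := rfl
        rw [this, Fin.snoc_castSucc]
      have hbexn : bex (Fin.snoc a (N - c) : Fin (n+1) → ℕ) n = N - c := by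
        rw [bex_last, Fin.snoc_last]
      rw [Finset.mem_filter, mem_Vfin]
      have hsum : (∑ i ∈ Finset.range (n + 1), bex (Fin.snoc a (N - c) : Fin (n+1) → ℕ) i) = N := by
        rw [Finset.sum_range_succ, hbexn]
        have : (∑ i ∈ Finset.range n, bex (Fin.snoc a (N - c) : Fin (n+1) → ℕ) i)
            = ∑ i ∈ Finset.range n, bex a i :=
          Finset.sum_congr rfl fun i hi => hbexlt i (Finset.mem_range.1 hi)
        rw [this, h2]
        omega
      refine ⟨⟨by omega, hsum, fun j hj1 hj2 => ?_⟩, ?_⟩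
      · have hsplit : (∑ i ∈ Finset.Ico (j - 1) (n + 1), bex (Fin.snoc a (N - c) : Fin (n+1) → ℕ) i)
            = (∑ i ∈ Finset.Ico (j - 1) n, bex (Fin.snoc a (N - c) : Fin (n+1) → ℕ) i) + (N - c) := by
          rw [Finset.sum_Ico_succ_top (by omega), hbexn]
        rw [hsplit]
        have hIco : (∑ i ∈ Finset.Ico (j - 1) n, bex (Fin.snoc a (N - c) : Fin (n+1) → ℕ) i)
            = ∑ i ∈ Finset.Ico (j - 1) n, bex a i :=
          Finset.sum_congr rfl fun i hi => hbexlt i (Finset.mem_Ico.1 hi).2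
        rw [hIco]
        rcases Nat.lt_or_ge j (n + 1) with hj | hj
        · have := h3 j hj1 (by omega)
          omega
        · have hjeq : j = n + 1 := by omega
          subst hjeq
          have : Finset.Ico (n + 1 - 1) n = ∅ := by
            rw [show n + 1 - 1 = n from rfl, Finset.Ico_self]
          rw [this, Finset.sum_empty]
          omega
      · have hs : (Fin.snoc a (N - c) : Fin (n + 1) → ℕ) (Fin.last n) = N - c :=
          by simp
        omega
    · -- left inverse
      intro b hb
      rw [Finset.mem_filter] at hb
      obtain ⟨hb, hfib⟩ := hb
      rw [mem_Vfin] at hb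
      have hble : bex b n ≤ N := by
        rw [← hb.2.1]
        exact Finset.single_le_sum (fun i _ => Nat.zero_le _) (by simp)
      have hbl := bex_last b
      have hlast : b (Fin.last n) = N - c := by omega
      rw [← hlast]
      exact Fin.snoc_init_self b
    · -- right inverse
      intro a _
      simp
    · -- weights
      intro b hb
      rw [Finset.mem_filter] at hb
      obtain ⟨hb', hfib⟩ := hb
      rw [mem_Vfin] at hb'
      have hble : bex b n ≤ N := by
        rw [← hb'.2.1]
        exact Finset.single_le_sum (fun i _ => Nat.zero_le _) (by simp)
      have hbl := bex_last b
      have hlast : b (Fin.last n) = N - c := by omega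
      rw [wt, wt, Fin.prod_univ_castSucc]
      have hfac : ∀ j : Fin n,
          lam ((Fin.castSucc j).val + 1) ^ (b (Fin.castSucc j)) / (Nat.factorial (b (Fin.castSucc j)))
            = lam (j.val + 1) ^ (Fin.init b j) / (Nat.factorial (Fin.init b j)) := fun j => by
        simp [Fin.init]
      rw [Finset.prod_congr rfl (fun j _ => hfac j)]
      rw [hlast]
      show (∏ j : Fin n, _) * (lam (n + 1) ^ (N - c) / (Nat.factorial (N - c)))
        = lam (n + 1) ^ (N - c) / (Nat.factorial (N - c)) * ∏ j : Fin n, _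
      rw [mul_comm]


lemma partial_le {k : ℕ} (g : ℕ → ℕ) (t : ℕ) :
    (∑ i ∈ Finset.Ico t k, g i) ≤ ∑ i ∈ Finset.range k, g i := by
  rw [Finset.range_eq_Ico]
  exact Finset.sum_le_sum_of_subset (fun i hi => by
    rw [Finset.mem_Ico] at *; omega)

lemma zeros_sum {k t : ℕ} (g : ℕ → ℕ) (ht : t ≤ k) (hz : ∀ i, i < t → g i = 0) :
    (∑ i ∈ Finset.range k, g i) = ∑ i ∈ Finset.Ico t k, g i := by
  rw [Finset.range_eq_Ico, ← Finset.sum_Ico_consecutive _ (Nat.zero_le t) ht]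
  rw [Finset.sum_eq_zero (fun i hi => hz i (Finset.mem_Ico.1 hi).2), zero_add]

lemma mem_XiHat_iff {K : ℕ} {b : Fin K → ℕ} : b ∈ XiHat K ↔
    (∀ j, 1 ≤ j → j ≤ K → (∑ i ∈ Finset.Ico (j - 1) K, bex b i) + j ≤ K + 1) ∧
      1 ≤ ∑ i ∈ Finset.range K, bex b i := by
  show ((∀ j, 1 ≤ j → j ≤ K → sumFrom b j + j ≤ K + 1) ∧ 1 ≤ ∑ ℓ, b ℓ) ↔ _
  rw [sum_univ_eq]
  constructor
  · rintro ⟨h1, h2⟩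
    exact ⟨fun j hj1 hj2 => by rw [← sumFrom_eq]; exact h1 j hj1 hj2, h2⟩
  · rintro ⟨h1, h2⟩
    exact ⟨fun j hj1 hj2 => by rw [sumFrom_eq]; exact h1 j hj1 hj2, h2⟩

lemma bex_trunc {K k' : ℕ} (b : Fin K → ℕ) (h : k' ≤ K) (i : ℕ) (hi : i < k') :
    bex (fun j : Fin k' => b (Fin.castLE h j)) i = bex b i := by
  have hiK : i < K := lt_of_lt_of_le hi h
  simp only [bex, dif_pos hi, dif_pos hiK]
  rfl

lemma mem_XiHat_trunc_iff {K k' : ℕ} {b : Fin K → ℕ} (h : k' ≤ K) :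
    ((fun j : Fin k' => b (Fin.castLE h j)) ∈ XiHat k') ↔
    (∀ j, 1 ≤ j → j ≤ k' → (∑ i ∈ Finset.Ico (j - 1) k', bex b i) + j ≤ k' + 1) ∧
      1 ≤ ∑ i ∈ Finset.range k', bex b i := by
  rw [mem_XiHat_iff]
  have he1 : ∀ j : ℕ, (∑ i ∈ Finset.Ico (j - 1) k', bex (fun j : Fin k' => b (Fin.castLE h j)) i)
      = ∑ i ∈ Finset.Ico (j - 1) k', bex b i := fun j =>
    Finset.sum_congr rfl fun i hi => bex_trunc b h i (Finset.mem_Ico.1 hi).2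
  have he2 : (∑ i ∈ Finset.range k', bex (fun j : Fin k' => b (Fin.castLE h j)) i)
      = ∑ i ∈ Finset.range k', bex b i :=
    Finset.sum_congr rfl fun i hi => bex_trunc b h i (Finset.mem_range.1 hi)
  rw [he2]
  constructor
  · rintro ⟨h1, h2⟩
    exact ⟨fun j hj1 hj2 => by rw [← he1 j]; exact h1 j hj1 hj2, h2⟩
  · rintro ⟨h1, h2⟩
    exact ⟨fun j hj1 hj2 => by rw [he1 j] at *; exact h1 j hj1 hj2, h2⟩

/-- the pieces of the decomposition of `Xi k` -/
def Sparam (q n K : ℕ) : Set (Fin n → ℕ) :=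
  {b | (∀ ℓ : Fin n, ℓ.val + 1 < q → b ℓ = 0) ∧ (∑ ℓ, b ℓ) + q = K + 1 ∧
    ∀ j, q < j → j ≤ n → sumFrom b j + j ≤ K}

lemma Sparam_finite (q n K : ℕ) : (Sparam q n K).Finite :=
  finite_bdd (K + 1) (fun b hb ℓ => le_trans (coord_le_sum b ℓ) (by
    have := hb.2.1; omega))

noncomputable def Sfin (q n K : ℕ) : Finset (Fin n → ℕ) := (Sparam_finite q n K).toFinset

lemma mem_Sfin {q n K : ℕ} {b : Fin n → ℕ} : b ∈ Sfin q n K ↔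
    (∀ i, i + 1 < q → bex b i = 0) ∧ (∑ i ∈ Finset.range n, bex b i) + q = K + 1 ∧
      ∀ j, q < j → j ≤ n → (∑ i ∈ Finset.Ico (j - 1) n, bex b i) + j ≤ K := by
  rw [Sfin, Set.Finite.mem_toFinset]
  show ((∀ ℓ : Fin n, _ → _) ∧ _ ∧ _) ↔ _
  rw [sum_univ_eq]
  constructor
  · rintro ⟨h1, h2, h3⟩
    refine ⟨fun i hi => ?_, h2, fun j hj1 hj2 => by rw [← sumFrom_eq]; exact h3 j hj1 hj2⟩
    · by_cases hin : i < n
      · rw [bex, dif_pos hin]; exact h1 ⟨i, hin⟩ hi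
      · exact bex_ge b i (by omega)
  · rintro ⟨h1, h2, h3⟩
    exact ⟨fun ℓ hℓ => by rw [← bex_lt b ℓ]; exact h1 ℓ.val hℓ, h2,
      fun j hj1 hj2 => by rw [sumFrom_eq]; exact h3 j hj1 hj2⟩

lemma Sparam_subset_Xi {q k : ℕ} (hq1 : 1 ≤ q) (hqk : q ≤ k) {b : Fin k → ℕ}
    (hb : b ∈ Sfin q k k) : b ∈ Xi k := by
  rw [mem_Sfin] at hb
  obtain ⟨hz, hσ, hc⟩ := hb
  constructor
  · rw [mem_XiHat_iff]
    refine ⟨fun j hj1 hj2 => ?_, by omega⟩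
    rcases le_or_gt j q with hjq | hjq
    · have := partial_le (k := k) (bex b) (j - 1)
      omega
    · exact le_trans (hc j hjq hj2) (by omega)
  · intro k' hk' htr
    rw [mem_XiHat_trunc_iff hk'.le] at htr
    obtain ⟨h1, h2⟩ := htr
    have hk'q : q ≤ k' := by
      by_contra hcon
      push_neg at hcon
      have : (∑ i ∈ Finset.range k', bex b i) = 0 :=
        Finset.sum_eq_zero (fun i hi => hz i (by rw [Finset.mem_range] at hi; omega))
      omega
    have hq := h1 q hq1 hk'q
    have hsplit : (∑ i ∈ Finset.Ico (q - 1) k, bex b i)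
        = (∑ i ∈ Finset.Ico (q - 1) k', bex b i) + ∑ i ∈ Finset.Ico k' k, bex b i :=
      (Finset.sum_Ico_consecutive _ (by omega) hk'.le).symm
    have hfull : (∑ i ∈ Finset.range k, bex b i) = ∑ i ∈ Finset.Ico (q - 1) k, bex b i :=
      zeros_sum (bex b) (by omega) (fun i hi => hz i (by omega))
    have htop := hc (k' + 1) (by omega) (by omega)
    have hIco : (∑ i ∈ Finset.Ico (k' + 1 - 1) k, bex b i)
        = ∑ i ∈ Finset.Ico k' k, bex b i := by congr 1
    rw [hIco] at htop
    omega

lemma Xi_mem_Sfin {k : ℕ} {b : Fin k → ℕ} (hb : b ∈ Xi k) :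
    ∃ q, 1 ≤ q ∧ q ≤ k ∧ (∑ i ∈ Finset.range k, bex b i) + q = k + 1 ∧ b ∈ Sfin q k k := by
  obtain ⟨hhat, hmin⟩ := hb
  rw [mem_XiHat_iff] at hhat
  obtain ⟨hA, hσ1⟩ := hhat
  have hk1 : 1 ≤ k := by
    by_contra hcon
    have hk0 : k = 0 := by omega
    subst hk0
    simp at hσ1
  have hσk : (∑ i ∈ Finset.range k, bex b i) ≤ k := by
    have h1' := hA 1 (le_refl _) hk1
    rw [show (1 : ℕ) - 1 = 0 from rfl] at h1'
    have h0 : (∑ i ∈ Finset.Ico 0 k, bex b i) = ∑ i ∈ Finset.range k, bex b i := by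
      rw [Finset.range_eq_Ico]
    omega
  have hex : ∃ i, bex b i ≠ 0 := by
    by_contra hcon
    push_neg at hcon
    have : (∑ i ∈ Finset.range k, bex b i) = 0 := Finset.sum_eq_zero (fun i _ => hcon i)
    omega
  obtain ⟨p, hp, hplow⟩ : ∃ p, bex b p ≠ 0 ∧ ∀ i, i < p → bex b i = 0 := by
    refine ⟨Nat.find hex, Nat.find_spec hex, fun i hi => ?_⟩
    by_contra hcon
    exact absurd (Nat.find_min' hex hcon) (by omega)
  have hpk : p < k := by
    by_contra hcon
    exact hp (bex_ge b p (by omega))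
  have C : ∀ j, p + 2 ≤ j → j ≤ k →
      (∑ i ∈ Finset.Ico (j - 1) k, bex b i) + j ≤ (∑ i ∈ Finset.range k, bex b i) + p := by
    intro j
    induction j using Nat.strong_induction_on with
    | _ j IH =>
      intro hj1 hj2
      have hk'lt : j - 1 < k := by omega
      have hm := hmin (j - 1) hk'lt
      rw [mem_XiHat_trunc_iff hk'lt.le] at hm
      rw [not_and_or] at hm
      rcases hm with hA' | hB'
      · push_neg at hA'
        obtain ⟨j', hj'1, hj'2, hj'3⟩ := hA'
        have hsplit : (∑ i ∈ Finset.Ico (j' - 1) k, bex b i)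
            = (∑ i ∈ Finset.Ico (j' - 1) (j - 1), bex b i)
              + ∑ i ∈ Finset.Ico (j - 1) k, bex b i :=
          (Finset.sum_Ico_consecutive _ (by omega) hk'lt.le).symm
        rcases le_or_gt j' (p + 1) with hj'p | hj'p
        · have hple := partial_le (k := k) (bex b) (j' - 1)
          omega
        · have hIH := IH j' (by omega) (by omega) (by omega)
          omega
      · push_neg at hB'
        have : bex b p = 0 := by
          have hsum0 : (∑ i ∈ Finset.range (j - 1), bex b i) = 0 := by omega
          rw [Finset.sum_eq_zero_iff] at hsum0
          exact hsum0 p (Finset.mem_range.2 (by omega))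
        exact absurd this hp
  have hσp : (∑ i ∈ Finset.range k, bex b i) = ∑ i ∈ Finset.Ico p k, bex b i :=
    zeros_sum (bex b) hpk.le hplow
  have hq2 : (∑ i ∈ Finset.range k, bex b i) + (p + 1) ≤ k + 1 := by
    have hAp := hA (p + 1) (by omega) (by omega)
    have he : (∑ i ∈ Finset.Ico (p + 1 - 1) k, bex b i) = ∑ i ∈ Finset.Ico p k, bex b i := by
      congr 1
    omega
  have hq3 : k ≤ (∑ i ∈ Finset.range k, bex b i) + p := by
    rcases le_or_gt (p + 2) k with hc2 | hc2
    · have := C k hc2 le_rfl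
      omega
    · have hAk := hA k hk1 le_rfl
      have hpe : k - 1 = p := by omega
      rw [hpe] at hAk
      omega
  refine ⟨p + 1, by omega, by omega, by omega, ?_⟩
  rw [mem_Sfin]
  refine ⟨fun i hi => hplow i (by omega), by omega, fun j hj1 hj2 => ?_⟩
  have := C j (by omega) hj2
  omega

lemma Sfin_top_eq (k : ℕ) (hk : 1 ≤ k) :
    Sfin k k k = {fun ℓ : Fin k => if ℓ.val = k - 1 then 1 else 0} := by
  ext b
  rw [mem_Sfin, Finset.mem_singleton]
  constructor
  · rintro ⟨hz, hσ, _⟩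
    have hsp : (∑ i ∈ Finset.range k, bex b i) = ∑ i ∈ Finset.Ico (k - 1) k, bex b i :=
      zeros_sum (bex b) (by omega) (fun i hi => hz i (by omega))
    have hIco : Finset.Ico (k - 1) k = {k - 1} := by
      ext i; simp only [Finset.mem_Ico, Finset.mem_singleton]; omega
    rw [hIco, Finset.sum_singleton] at hsp
    have hbk : bex b (k - 1) = 1 := by omega
    funext ℓ
    by_cases hl : ℓ.val = k - 1
    · rw [if_pos hl, ← bex_lt b ℓ, hl, hbk]
    · rw [if_neg hl, ← bex_lt b ℓ]
      exact hz ℓ.val (by have := ℓ.isLt; omega)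
  · intro hb
    subst hb
    have hbex : ∀ i, bex (fun ℓ : Fin k => if ℓ.val = k - 1 then 1 else 0) i
        = if i = k - 1 then 1 else 0 := by
      intro i
      by_cases hik : i < k
      · rw [bex, dif_pos hik]
      · rw [bex_ge _ i (by omega), if_neg (by omega)]
    refine ⟨fun i hi => by rw [hbex i, if_neg (by omega)], ?_, fun j hj1 hj2 => by omega⟩
    have : (∑ i ∈ Finset.range k, bex (fun ℓ : Fin k => if ℓ.val = k - 1 then 1 else 0) i)
        = ∑ i ∈ Finset.range k, if i = k - 1 then 1 else 0 :=
      Finset.sum_congr rfl fun i _ => hbex i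
    rw [this, Finset.sum_ite_eq' (Finset.range k) (k - 1) (fun _ => 1),
      if_pos (Finset.mem_range.2 (by omega))]
    omega

lemma sum_Sfin_top (k : ℕ) (hk : 1 ≤ k) :
    ∑ b ∈ Sfin k k k, wt lam k b = lam k := by
  rw [Sfin_top_eq k hk, Finset.sum_singleton, wt]
  rw [Fintype.prod_eq_single (⟨k - 1, by omega⟩ : Fin k) ?_]
  · have h1 : k - 1 + 1 = k := by omega
    simp [h1]
  · intro x hx
    have hxv : x.val ≠ k - 1 := fun hc => hx (Fin.ext hc)
    simp [hxv]

/-- dropping a trailing zero coordinate -/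
lemma sum_Sfin_pad (q n : ℕ) (hq1 : 1 ≤ q) (hqn : q ≤ n) :
    ∑ b ∈ Sfin q (n + 1) (n + 1), wt lam (n + 1) b = ∑ u ∈ Sfin q n (n + 1), wt lam n u := by
  apply Finset.sum_nbij' (i := fun b => Fin.init b)
    (j := fun u => (Fin.snoc u 0 : Fin (n + 1) → ℕ))
  · intro b hb
    rw [mem_Sfin] at hb ⊢
    obtain ⟨hz, hσ, hcons⟩ := hb
    have htop := hcons (n + 1) (by omega) (le_refl _)
    have hIco : Finset.Ico (n + 1 - 1) (n + 1) = {n} := by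
      ext i; simp only [Finset.mem_Ico, Finset.mem_singleton]; omega
    rw [hIco, Finset.sum_singleton] at htop
    have hbn : bex b n = 0 := by omega
    have hsum : (∑ i ∈ Finset.range n, bex (Fin.init b) i) = ∑ i ∈ Finset.range n, bex b i :=
      Finset.sum_congr rfl fun i hi => bex_init b i (Finset.mem_range.1 hi)
    have hsum2 : (∑ i ∈ Finset.range (n + 1), bex b i)
        = (∑ i ∈ Finset.range n, bex b i) + bex b n := Finset.sum_range_succ _ _
    refine ⟨fun i hi => ?_, by omega, fun j hj1 hj2 => ?_⟩
    · by_cases hin : i < n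
      · rw [bex_init b i hin]; exact hz i hi
      · exact bex_ge _ i (by omega)
    · have hcond := hcons j hj1 (by omega)
      have hsplit : (∑ i ∈ Finset.Ico (j - 1) (n + 1), bex b i)
          = (∑ i ∈ Finset.Ico (j - 1) n, bex b i) + bex b n :=
        Finset.sum_Ico_succ_top (by omega) _
      have hIco2 : (∑ i ∈ Finset.Ico (j - 1) n, bex (Fin.init b) i)
          = ∑ i ∈ Finset.Ico (j - 1) n, bex b i :=
        Finset.sum_congr rfl fun i hi => bex_init b i (Finset.mem_Ico.1 hi).2
      rw [hIco2]
      omega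
  · intro u hu
    rw [mem_Sfin] at hu ⊢
    obtain ⟨hz, hσ, hcons⟩ := hu
    have hlt : ∀ i, i < n → bex (Fin.snoc u 0 : Fin (n + 1) → ℕ) i = bex u i := by
      intro i hi
      have h' : i < n + 1 := Nat.lt_succ_of_lt hi
      simp only [bex, dif_pos hi, dif_pos h']
      show (Fin.snoc u 0 : Fin (n + 1) → ℕ) ⟨i, h'⟩ = u ⟨i, hi⟩
      have : (⟨i, h'⟩ : Fin (n + 1)) = Fin.castSucc ⟨i, hi⟩ := rfl
      rw [this, Fin.snoc_castSucc]
    have hn0 : bex (Fin.snoc u 0 : Fin (n + 1) → ℕ) n = 0 := by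
      rw [bex_last, Fin.snoc_last]
    refine ⟨fun i hi => ?_, ?_, fun j hj1 hj2 => ?_⟩
    · rcases lt_trichotomy i n with h | h | h
      · rw [hlt i h]; exact hz i hi
      · subst h; exact hn0
      · exact bex_ge _ i (by omega)
    · have hcg : (∑ i ∈ Finset.range n, bex (Fin.snoc u 0 : Fin (n + 1) → ℕ) i)
          = ∑ i ∈ Finset.range n, bex u i :=
        Finset.sum_congr rfl fun i hi => hlt i (Finset.mem_range.1 hi)
      rw [Finset.sum_range_succ, hn0, hcg]
      omega
    · rcases le_or_gt j n with hjn | hjn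
      · have hsplit := Finset.sum_Ico_succ_top (by omega : j - 1 ≤ n)
          (bex (Fin.snoc u 0 : Fin (n + 1) → ℕ))
        have hcg : (∑ i ∈ Finset.Ico (j - 1) n, bex (Fin.snoc u 0 : Fin (n + 1) → ℕ) i)
            = ∑ i ∈ Finset.Ico (j - 1) n, bex u i :=
          Finset.sum_congr rfl fun i hi => hlt i (Finset.mem_Ico.1 hi).2
        have := hcons j hj1 hjn
        omega
      · have hje : j = n + 1 := by omega
        subst hje
        have hIco : Finset.Ico (n + 1 - 1) (n + 1) = {n} := by
          ext i; simp only [Finset.mem_Ico, Finset.mem_singleton]; omega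
        rw [hIco, Finset.sum_singleton, hn0]
        omega
  · intro b hb
    rw [mem_Sfin] at hb
    have htop := hb.2.2 (n + 1) (by omega) (le_refl _)
    have hIco : Finset.Ico (n + 1 - 1) (n + 1) = {n} := by
      ext i; simp only [Finset.mem_Ico, Finset.mem_singleton]; omega
    rw [hIco, Finset.sum_singleton] at htop
    have hbl := bex_last b
    have hbn : b (Fin.last n) = 0 := by omega
    rw [← hbn]
    exact Fin.snoc_init_self b
  · intro u _
    simp
  · intro b hb
    rw [mem_Sfin] at hb
    have htop := hb.2.2 (n + 1) (by omega) (le_refl _)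
    have hIco : Finset.Ico (n + 1 - 1) (n + 1) = {n} := by
      ext i; simp only [Finset.mem_Ico, Finset.mem_singleton]; omega
    rw [hIco, Finset.sum_singleton] at htop
    have hbl := bex_last b
    have hbn : b (Fin.last n) = 0 := by omega
    rw [wt, wt, Fin.prod_univ_castSucc]
    have hfac : ∀ j : Fin n,
        lam ((Fin.castSucc j).val + 1) ^ (b (Fin.castSucc j)) / (Nat.factorial (b (Fin.castSucc j)))
          = lam (j.val + 1) ^ (Fin.init b j) / (Nat.factorial (Fin.init b j)) := fun j => by
      simp [Fin.init]
    rw [Finset.prod_congr rfl (fun j _ => hfac j), hbn]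
    simp

/-- largest tight index -/
noncomputable def Qof (n : ℕ) (a : Fin n → ℕ) : ℕ :=
  (((Finset.Icc 1 n).filter
    (fun j => (∑ i ∈ Finset.Ico (j - 1) n, bex a i) + j = n + 2)).max).unbotD 0

lemma max_helper {F : Finset ℕ} (hne : F.Nonempty) :
    F.max.unbotD 0 ∈ F ∧ ∀ x ∈ F, x ≤ F.max.unbotD 0 := by
  obtain ⟨m, hm⟩ := Finset.max_of_nonempty hne
  have hu : F.max.unbotD 0 = m := by rw [hm]; rfl
  rw [hu]
  exact ⟨Finset.mem_of_max hm, fun x hx => Finset.le_max_of_eq hx hm⟩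

lemma max_eq {F : Finset ℕ} {q : ℕ} (hq : q ∈ F) (hbd : ∀ x ∈ F, x ≤ q) :
    F.max.unbotD 0 = q := by
  obtain ⟨hmem, hb2⟩ := max_helper ⟨q, hq⟩
  exact le_antisymm (hbd _ hmem) (hb2 q hq)

lemma Vfin_pos_len {n : ℕ} {a : Fin n → ℕ} (ha : a ∈ Vfin n (n + 1)) : 1 ≤ n := by
  rw [mem_Vfin] at ha
  by_contra h
  have hn0 : n = 0 := by omega
  subst hn0
  simpa using ha.2.1

lemma Qof_spec {n : ℕ} {a : Fin n → ℕ} (ha : a ∈ Vfin n (n + 1)) :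
    1 ≤ Qof n a ∧ Qof n a ≤ n ∧
      (∑ i ∈ Finset.Ico (Qof n a - 1) n, bex a i) + Qof n a = n + 2 ∧
      ∀ j, Qof n a < j → j ≤ n → (∑ i ∈ Finset.Ico (j - 1) n, bex a i) + j ≤ n + 1 := by
  have hn := Vfin_pos_len ha
  rw [mem_Vfin] at ha
  obtain ⟨-, hσ, hA⟩ := ha
  have hQ : Qof n a = (((Finset.Icc 1 n).filter
      (fun j => (∑ i ∈ Finset.Ico (j - 1) n, bex a i) + j = n + 2)).max).unbotD 0 := rfl
  rw [hQ]
  have h1F : (1 : ℕ) ∈ (Finset.Icc 1 n).filter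
      (fun j => (∑ i ∈ Finset.Ico (j - 1) n, bex a i) + j = n + 2) := by
    rw [Finset.mem_filter, Finset.mem_Icc]
    refine ⟨⟨le_refl _, hn⟩, ?_⟩
    rw [show (1 : ℕ) - 1 = 0 from rfl, ← Finset.range_eq_Ico]
    omega
  obtain ⟨hmem, hbd⟩ := max_helper ⟨1, h1F⟩
  rw [Finset.mem_filter, Finset.mem_Icc] at hmem
  refine ⟨hmem.1.1, hmem.1.2, hmem.2, fun j hj1 hj2 => ?_⟩
  have hAj := hA j (by omega) hj2
  by_cases htight : (∑ i ∈ Finset.Ico (j - 1) n, bex a i) + j = n + 2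
  · have hjF : j ∈ (Finset.Icc 1 n).filter
        (fun j => (∑ i ∈ Finset.Ico (j - 1) n, bex a i) + j = n + 2) := by
      rw [Finset.mem_filter, Finset.mem_Icc]
      exact ⟨⟨by omega, hj2⟩, htight⟩
    have := hbd j hjF
    omega
  · omega

lemma sum_T_eq (n q : ℕ) (hq1 : 1 ≤ q) (hqn : q ≤ n)
    (hprev : ∑ v ∈ Vfin (q - 1) (q - 1), wt lam (q - 1) v = 1) :
    ∑ a ∈ (Vfin n (n + 1)).filter (fun a => Qof n a = q), wt lam n a
      = ∑ u ∈ Sfin q n (n + 1), wt lam n u := by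
  have hq1n : q - 1 ≤ n := by omega
  set zl : (Fin n → ℕ) → (Fin n → ℕ) :=
    (fun a ℓ => if ℓ.val + 1 < q then 0 else a ℓ) with hzl
  have hbzl : ∀ (a : Fin n → ℕ) (i : ℕ),
      bex (zl a) i = if i + 1 < q then 0 else bex a i := by
    intro a i
    by_cases hin : i < n
    · simp only [bex, dif_pos hin, hzl]
    · rw [bex_ge _ i (by omega), bex_ge _ i (by omega)]
      simp
  have hmaps : ∀ a ∈ (Vfin n (n + 1)).filter (fun a => Qof n a = q),
      zl a ∈ Sfin q n (n + 1) := by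
    intro a haf
    rw [Finset.mem_filter] at haf
    obtain ⟨haV, haQ⟩ := haf
    have hspec := Qof_spec haV
    rw [haQ] at hspec
    obtain ⟨-, -, htight, hstrict⟩ := hspec
    rw [mem_Vfin] at haV
    obtain ⟨-, hσ, hA⟩ := haV
    rw [mem_Sfin]
    refine ⟨fun i hi => by rw [hbzl, if_pos hi], ?_, fun j hj1 hj2 => ?_⟩
    · have hz0 : (∑ i ∈ Finset.range n, bex (zl a) i)
          = ∑ i ∈ Finset.Ico (q - 1) n, bex (zl a) i :=
        zeros_sum _ hq1n (fun i hi => by rw [hbzl, if_pos (by omega)])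
      have hcg : (∑ i ∈ Finset.Ico (q - 1) n, bex (zl a) i)
          = ∑ i ∈ Finset.Ico (q - 1) n, bex a i :=
        Finset.sum_congr rfl fun i hi => by
          rw [hbzl, if_neg (by have := (Finset.mem_Ico.1 hi).1; omega)]
      omega
    · have hcg : (∑ i ∈ Finset.Ico (j - 1) n, bex (zl a) i)
          = ∑ i ∈ Finset.Ico (j - 1) n, bex a i :=
        Finset.sum_congr rfl fun i hi => by
          rw [hbzl, if_neg (by have := (Finset.mem_Ico.1 hi).1; omega)]
      rw [hcg]
      exact hstrict j hj1 hj2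
  rw [← Finset.sum_fiberwise_of_maps_to hmaps (wt lam n)]
  apply Finset.sum_congr rfl
  intro u hu
  have huS := hu
  rw [mem_Sfin] at huS
  obtain ⟨huz, huσ, hucons⟩ := huS
  set cmb : (Fin (q - 1) → ℕ) → (Fin n → ℕ) :=
    (fun v ℓ => if h : ℓ.val < q - 1 then v ⟨ℓ.val, h⟩ else u ℓ) with hcmb
  set low : (Fin n → ℕ) → (Fin (q - 1) → ℕ) :=
    (fun a => fun i => a (Fin.castLE hq1n i)) with hlow
  have hblow : ∀ (a : Fin n → ℕ) (i : ℕ) (hi : i < q - 1), bex (low a) i = bex a i := by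
    intro a i hi
    have hin : i < n := by omega
    simp only [bex, dif_pos hi, dif_pos hin, hlow]
    rfl
  have hbcmb : ∀ (v : Fin (q - 1) → ℕ) (i : ℕ),
      bex (cmb v) i = if i < q - 1 then bex v i else bex u i := by
    intro v i
    by_cases hin : i < n
    · by_cases hiq : i < q - 1
      · simp only [bex, dif_pos hin, dif_pos hiq, hcmb]
        rw [if_pos hiq]
      · simp only [bex, dif_pos hin, dif_neg hiq, hcmb]
        rw [if_neg hiq]
    · have hiq : ¬ i < q - 1 := by omega
      rw [bex_ge _ i (by omega), if_neg hiq, bex_ge _ i (by omega)]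
  have hu0 : (∑ i ∈ Finset.range n, bex u i) = ∑ i ∈ Finset.Ico (q - 1) n, bex u i :=
    zeros_sum _ hq1n (fun i hi => huz i (by omega))
  calc ∑ a ∈ ((Vfin n (n + 1)).filter (fun a => Qof n a = q)).filter (fun a => zl a = u),
        wt lam n a
      = ∑ v ∈ Vfin (q - 1) (q - 1), wt lam n u * wt lam (q - 1) v := by
        apply Finset.sum_nbij' (i := low) (j := cmb)
        · -- forward membership
          intro a haf
          rw [Finset.mem_filter, Finset.mem_filter] at haf
          obtain ⟨⟨haV, haQ⟩, hau⟩ := haf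
          have hspec := Qof_spec haV
          rw [haQ] at hspec
          obtain ⟨-, -, htight, -⟩ := hspec
          rw [mem_Vfin] at haV
          obtain ⟨-, hσ, hA⟩ := haV
          have hsplitT : (∑ i ∈ Finset.range n, bex a i)
              = (∑ i ∈ Finset.Ico 0 (q - 1), bex a i) + ∑ i ∈ Finset.Ico (q - 1) n, bex a i := by
            rw [Finset.range_eq_Ico, ← Finset.sum_Ico_consecutive _ (Nat.zero_le _) hq1n]
          rw [mem_Vfin]
          refine ⟨le_refl _, ?_, fun j hj1 hj2 => ?_⟩
          · have hcg : (∑ i ∈ Finset.range (q - 1), bex (low a) i)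
                = ∑ i ∈ Finset.Ico 0 (q - 1), bex a i := by
              rw [Finset.range_eq_Ico]
              exact Finset.sum_congr rfl fun i hi =>
                hblow a i (Finset.mem_Ico.1 hi).2
            omega
          · have hcg : (∑ i ∈ Finset.Ico (j - 1) (q - 1), bex (low a) i)
                = ∑ i ∈ Finset.Ico (j - 1) (q - 1), bex a i :=
              Finset.sum_congr rfl fun i hi => hblow a i (Finset.mem_Ico.1 hi).2
            have hAj := hA j hj1 (by omega)
            have hsplitj : (∑ i ∈ Finset.Ico (j - 1) n, bex a i)
                = (∑ i ∈ Finset.Ico (j - 1) (q - 1), bex a i)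
                  + ∑ i ∈ Finset.Ico (q - 1) n, bex a i :=
              (Finset.sum_Ico_consecutive _ (by omega) hq1n).symm
            omega
        · -- backward membership
          intro v hv
          rw [mem_Vfin] at hv
          obtain ⟨-, hvσ, hvA⟩ := hv
          have hsplitC : (∑ i ∈ Finset.range n, bex (cmb v) i)
              = (∑ i ∈ Finset.Ico 0 (q - 1), bex (cmb v) i)
                + ∑ i ∈ Finset.Ico (q - 1) n, bex (cmb v) i := by
            rw [Finset.range_eq_Ico, ← Finset.sum_Ico_consecutive _ (Nat.zero_le _) hq1n]
          have hc1 : (∑ i ∈ Finset.Ico 0 (q - 1), bex (cmb v) i)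
              = ∑ i ∈ Finset.range (q - 1), bex v i := by
            rw [Finset.range_eq_Ico]
            exact Finset.sum_congr rfl fun i hi => by
              rw [hbcmb, if_pos (Finset.mem_Ico.1 hi).2]
          have hc2 : ∀ t, q - 1 ≤ t → (∑ i ∈ Finset.Ico t n, bex (cmb v) i)
              = ∑ i ∈ Finset.Ico t n, bex u i := by
            intro t ht
            exact Finset.sum_congr rfl fun i hi => by
              rw [hbcmb, if_neg (by have := (Finset.mem_Ico.1 hi).1; omega)]
          have hsumC : (∑ i ∈ Finset.range n, bex (cmb v) i) = n + 1 := by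
            rw [hsplitC, hc1, hc2 (q - 1) (le_refl _)]
            omega
          have hVmem : cmb v ∈ Vfin n (n + 1) := by
            rw [mem_Vfin]
            refine ⟨by omega, hsumC, fun j hj1 hj2 => ?_⟩
            rcases le_or_gt j (q - 1) with hjq | hjq
            · have hsplitj : (∑ i ∈ Finset.Ico (j - 1) n, bex (cmb v) i)
                  = (∑ i ∈ Finset.Ico (j - 1) (q - 1), bex (cmb v) i)
                    + ∑ i ∈ Finset.Ico (q - 1) n, bex (cmb v) i :=
                (Finset.sum_Ico_consecutive _ (by omega) hq1n).symm
              have hcgv : (∑ i ∈ Finset.Ico (j - 1) (q - 1), bex (cmb v) i)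
                  = ∑ i ∈ Finset.Ico (j - 1) (q - 1), bex v i :=
                Finset.sum_congr rfl fun i hi => by
                  rw [hbcmb, if_pos (Finset.mem_Ico.1 hi).2]
              have hvAj := hvA j hj1 hjq
              rw [hc2 (q - 1) (le_refl _)] at hsplitj
              omega
            · have hcg := hc2 (j - 1) (by omega)
              rcases eq_or_lt_of_le (show q ≤ j by omega) with hjq2 | hjq2
              · subst hjq2
                rw [hcg]
                omega
              · rw [hcg]
                have := hucons j hjq2 hj2
                omega
          have hQeq : Qof n (cmb v) = q := by
            have hqF : q ∈ (Finset.Icc 1 n).filter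
                (fun j => (∑ i ∈ Finset.Ico (j - 1) n, bex (cmb v) i) + j = n + 2) := by
              rw [Finset.mem_filter, Finset.mem_Icc]
              refine ⟨⟨hq1, hqn⟩, ?_⟩
              rw [hc2 (q - 1) (le_refl _)]
              omega
            apply max_eq hqF
            intro x hx
            rw [Finset.mem_filter, Finset.mem_Icc] at hx
            by_contra hcon
            push_neg at hcon
            have hcg := hc2 (x - 1) (by omega)
            have := hucons x hcon hx.1.2
            omega
          have hzleq : zl (cmb v) = u := by
            funext ℓ
            by_cases hl : ℓ.val + 1 < q
            · have : u ℓ = bex u ℓ.val := (bex_lt u ℓ).symm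
              rw [hzl]
              simp only [if_pos hl]
              rw [this, huz ℓ.val hl]
            · rw [hzl]
              simp only [if_neg hl]
              rw [hcmb]
              simp only [dif_neg (show ¬ ℓ.val < q - 1 by omega)]
          rw [Finset.mem_filter, Finset.mem_filter]
          exact ⟨⟨hVmem, hQeq⟩, hzleq⟩
        · -- left inverse
          intro a haf
          rw [Finset.mem_filter, Finset.mem_filter] at haf
          obtain ⟨⟨haV, haQ⟩, hau⟩ := haf
          funext ℓ
          by_cases hl : ℓ.val < q - 1
          · rw [hcmb]
            simp only [dif_pos hl]
            rw [hlow]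
            show a (Fin.castLE hq1n ⟨ℓ.val, hl⟩) = a ℓ
            congr 1
          · rw [hcmb]
            simp only [dif_neg hl]
            rw [← hau, hzl]
            simp only [if_neg (show ¬ ℓ.val + 1 < q by omega)]
        · -- right inverse
          intro v _
          funext i
          rw [hlow]
          show cmb v (Fin.castLE hq1n i) = v i
          rw [hcmb]
          have hi : (Fin.castLE hq1n i).val < q - 1 := i.isLt
          simp only [dif_pos hi]
          congr 1
        · -- weights
          intro a haf
          rw [Finset.mem_filter, Finset.mem_filter] at haf
          obtain ⟨⟨haV, haQ⟩, hau⟩ := haf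
          rw [wt_eq, wt_eq, wt_eq]
          have hsplitA : (∏ i ∈ Finset.range n, wf lam (bex a) i)
              = (∏ i ∈ Finset.Ico 0 (q - 1), wf lam (bex a) i)
                * ∏ i ∈ Finset.Ico (q - 1) n, wf lam (bex a) i := by
            rw [Finset.range_eq_Ico, ← Finset.prod_Ico_consecutive _ (Nat.zero_le _) hq1n]
          have hsplitU : (∏ i ∈ Finset.range n, wf lam (bex u) i)
              = (∏ i ∈ Finset.Ico 0 (q - 1), wf lam (bex u) i)
                * ∏ i ∈ Finset.Ico (q - 1) n, wf lam (bex u) i := by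
            rw [Finset.range_eq_Ico, ← Finset.prod_Ico_consecutive _ (Nat.zero_le _) hq1n]
          have hU1 : (∏ i ∈ Finset.Ico 0 (q - 1), wf lam (bex u) i) = 1 :=
            Finset.prod_eq_one fun i hi =>
              wf_zero lam _ i (huz i (by have := (Finset.mem_Ico.1 hi).2; omega))
          have hU2 : (∏ i ∈ Finset.Ico (q - 1) n, wf lam (bex u) i)
              = ∏ i ∈ Finset.Ico (q - 1) n, wf lam (bex a) i := by
            apply Finset.prod_congr rfl
            intro i hi
            apply wf_congr
            rw [← hau, hbzl, if_neg (by have := (Finset.mem_Ico.1 hi).1; omega)]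
          have hL : (∏ i ∈ Finset.range (q - 1), wf lam (bex (low a)) i)
              = ∏ i ∈ Finset.Ico 0 (q - 1), wf lam (bex a) i := by
            rw [Finset.range_eq_Ico]
            apply Finset.prod_congr rfl
            intro i hi
            apply wf_congr
            exact hblow a i (Finset.mem_Ico.1 hi).2
          rw [hsplitA, hsplitU, hU1, hU2, hL, one_mul]
          ring
  _ = wt lam n u := by
        rw [← Finset.mul_sum, hprev, mul_one]

lemma Xi_finite (k : ℕ) : (Xi k).Finite := by
  apply finite_bdd k
  intro b hb ℓ
  have hhat := hb.1
  rw [mem_XiHat_iff] at hhat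
  obtain ⟨hA, hσ⟩ := hhat
  have h1 := hA 1 le_rfl ℓ.pos
  rw [show (1 : ℕ) - 1 = 0 from rfl, ← Finset.range_eq_Ico] at h1
  have hc := coord_le_sum b ℓ
  rw [sum_univ_eq] at hc
  omega

noncomputable def XiFin (k : ℕ) : Finset (Fin k → ℕ) := (Xi_finite k).toFinset

lemma main_identity (n : ℕ)
    (hprev : ∀ q, 1 ≤ q → q ≤ n → ∑ v ∈ Vfin (q - 1) (q - 1), wt lam (q - 1) v = 1) :
    ∑ b ∈ XiFin (n + 1), wt lam (n + 1) b = lam (n + 1) + gamma lam n (n + 1) := by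
  have hmaps : ∀ b ∈ XiFin (n + 1),
      (n + 2) - (∑ i ∈ Finset.range (n + 1), bex b i) ∈ Finset.Icc 1 (n + 1) := by
    intro b hb
    rw [XiFin, Set.Finite.mem_toFinset] at hb
    obtain ⟨q, hq1, hq2, hq3, -⟩ := Xi_mem_Sfin hb
    rw [Finset.mem_Icc]
    omega
  rw [← Finset.sum_fiberwise_of_maps_to hmaps (wt lam (n + 1))]
  have hfib : ∀ q ∈ Finset.Icc 1 (n + 1),
      (XiFin (n + 1)).filter
          (fun b => (n + 2) - (∑ i ∈ Finset.range (n + 1), bex b i) = q)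
        = Sfin q (n + 1) (n + 1) := by
    intro q hq
    rw [Finset.mem_Icc] at hq
    ext b
    rw [Finset.mem_filter, XiFin, Set.Finite.mem_toFinset]
    constructor
    · rintro ⟨hb, hfq⟩
      obtain ⟨q', h1, h2, h3, h4⟩ := Xi_mem_Sfin hb
      have hqq : q' = q := by omega
      rwa [hqq] at h4
    · intro hb
      have hXi := Sparam_subset_Xi hq.1 hq.2 hb
      rw [mem_Sfin] at hb
      exact ⟨hXi, by have := hb.2.1; omega⟩
  rw [Finset.sum_congr rfl (fun q hq => Finset.sum_congr (hfib q hq) (fun _ _ => rfl))]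
  rw [show Finset.Icc 1 (n + 1) = insert (n + 1) (Finset.Icc 1 n) from by
    ext x; simp only [Finset.mem_Icc, Finset.mem_insert]; omega]
  rw [Finset.sum_insert (by simp)]
  rw [sum_Sfin_top lam (n + 1) (by omega)]
  congr 1
  rw [gamma_eq_sum lam n (n + 1) (by omega)]
  have hmaps2 : ∀ a ∈ Vfin n (n + 1), Qof n a ∈ Finset.Icc 1 n := fun a ha => by
    have hs := Qof_spec ha
    rw [Finset.mem_Icc]
    exact ⟨hs.1, hs.2.1⟩
  rw [← Finset.sum_fiberwise_of_maps_to hmaps2 (wt lam n)]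
  apply Finset.sum_congr rfl
  intro q hq
  rw [Finset.mem_Icc] at hq
  rw [sum_Sfin_pad lam q n hq.1 hq.2, ← sum_T_eq lam n q hq.1 hq.2 (hprev q hq.1 hq.2)]

lemma gamma_nonneg : ∀ n, (∀ j, 1 ≤ j → j ≤ n → 0 ≤ lam j) → ∀ N, 0 ≤ gamma lam n N := by
  intro n
  induction n with
  | zero =>
    intro _ N
    cases N with
    | zero => rw [gamma_zero_zero]; norm_num
    | succ N => rw [gamma_zero_succ]
  | succ n IH =>
    intro hl N
    rw [gamma_succ]
    apply Finset.sum_nonneg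
    intro c _
    apply mul_nonneg
    · exact div_nonneg (pow_nonneg (hl (n + 1) (by omega) le_rfl) _) (Nat.cast_nonneg _)
    · exact IH (fun j h1 h2 => hl j h1 (by omega)) c

lemma gamma_diag_succ (n : ℕ) :
    gamma lam (n + 1) (n + 1) = lam (n + 1) * gamma lam n n + gamma lam n (n + 1) := by
  rw [gamma_succ]
  rw [show Finset.Icc n (n + 1) = insert n {n + 1} from by
    ext x; simp only [Finset.mem_Icc, Finset.mem_insert, Finset.mem_singleton]; omega]
  rw [Finset.sum_insert (by simp), Finset.sum_singleton]
  have h1 : n + 1 - n = 1 := by omega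
  have h2 : n + 1 - (n + 1) = 0 := by omega
  rw [h1, h2]
  simp [Nat.factorial]

lemma gamma_two_step (n : ℕ) :
    gamma lam (n + 1) (n + 2) = lam (n + 1) ^ 2 / 2 * gamma lam n n
      + lam (n + 1) * gamma lam n (n + 1) + gamma lam n (n + 2) := by
  rw [gamma_succ]
  rw [show Finset.Icc n (n + 2) = insert n (insert (n + 1) {n + 2}) from by
    ext x
    simp only [Finset.mem_Icc, Finset.mem_insert, Finset.mem_singleton]
    omega]
  rw [Finset.sum_insert (by simp), Finset.sum_insert (by simp), Finset.sum_singleton]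
  have h1 : n + 2 - n = 2 := by omega
  have h2 : n + 2 - (n + 1) = 1 := by omega
  have h3 : n + 2 - (n + 2) = 0 := by omega
  rw [h1, h2, h3]
  simp [Nat.factorial]
  ring

lemma gamma_mono : ∀ n, (∀ j, 1 ≤ j → j ≤ n → 0 ≤ lam j ∧ lam j ≤ 1) →
    (∀ j, j < n → gamma lam j j = 1 ∧ gamma lam j (j + 1) = 1 - lam (j + 1)) →
    ∀ N, n ≤ N → gamma lam n (N + 1) ≤ gamma lam n N := by
  intro n
  induction n with
  | zero =>
    intro _ _ N _
    rw [gamma_zero_succ]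
    cases N with
    | zero => rw [gamma_zero_zero]; norm_num
    | succ N => rw [gamma_zero_succ]
  | succ n IH =>
    intro hl hg N hN
    have hlam := hl (n + 1) (by omega) le_rfl
    have hgn := hg n (by omega)
    have hnn : ∀ N', 0 ≤ gamma lam n N' :=
      gamma_nonneg lam n (fun j h1 h2 => (hl j h1 (by omega)).1)
    have hIcc1 : Finset.Icc n (N + 1) = insert n ((Finset.Icc n N).image (· + 1)) := by
      ext x
      simp only [Finset.mem_insert, Finset.mem_image, Finset.mem_Icc]
      constructor
      · intro hx
        rcases Nat.eq_or_lt_of_le hx.1 with h | h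
        · exact Or.inl h.symm
        · exact Or.inr ⟨x - 1, by omega, by omega⟩
      · rintro (rfl | ⟨y, hy, rfl⟩) <;> omega
    have hIcc2 : Finset.Icc n N = insert n (Finset.Icc (n + 1) N) := by
      ext x; simp only [Finset.mem_Icc, Finset.mem_insert]; omega
    have hnm1 : n ∉ (Finset.Icc n N).image (· + 1) := by
      simp only [Finset.mem_image, Finset.mem_Icc]
      rintro ⟨y, hy, hc⟩
      omega
    have hnm2 : n ∉ Finset.Icc (n + 1) N := by
      simp only [Finset.mem_Icc]; omega
    have hLHS : gamma lam (n + 1) (N + 1)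
        = lam (n + 1) ^ (N + 1 - n) / (Nat.factorial (N + 1 - n)) * gamma lam n n
          + (lam (n + 1) ^ (N - n) / (Nat.factorial (N - n)) * gamma lam n (n + 1)
            + ∑ c ∈ Finset.Icc (n + 1) N,
                lam (n + 1) ^ (N - c) / (Nat.factorial (N - c)) * gamma lam n (c + 1)) := by
      rw [gamma_succ, hIcc1, Finset.sum_insert hnm1,
        Finset.sum_image (fun a _ b _ h => by omega)]
      congr 1
      have hcg : ∀ c ∈ Finset.Icc n N,
          lam (n + 1) ^ (N + 1 - (c + 1)) / (Nat.factorial (N + 1 - (c + 1)))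
              * gamma lam n (c + 1)
            = lam (n + 1) ^ (N - c) / (Nat.factorial (N - c)) * gamma lam n (c + 1) := by
        intro c _
        rw [Nat.succ_sub_succ]
      rw [Finset.sum_congr rfl hcg, hIcc2, Finset.sum_insert hnm2]
    have hRHS : gamma lam (n + 1) N
        = lam (n + 1) ^ (N - n) / (Nat.factorial (N - n)) * gamma lam n n
          + ∑ c ∈ Finset.Icc (n + 1) N,
              lam (n + 1) ^ (N - c) / (Nat.factorial (N - c)) * gamma lam n c := by
      rw [gamma_succ, hIcc2, Finset.sum_insert hnm2]
    rw [hLHS, hRHS]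
    have htail : (∑ c ∈ Finset.Icc (n + 1) N,
          lam (n + 1) ^ (N - c) / (Nat.factorial (N - c)) * gamma lam n (c + 1))
        ≤ ∑ c ∈ Finset.Icc (n + 1) N,
            lam (n + 1) ^ (N - c) / (Nat.factorial (N - c)) * gamma lam n c := by
      apply Finset.sum_le_sum
      intro c hc
      rw [Finset.mem_Icc] at hc
      have hm := IH (fun j h1 h2 => hl j h1 (by omega)) (fun j hj => hg j (by omega))
        c (by omega)
      have hwnn : 0 ≤ lam (n + 1) ^ (N - c) / (Nat.factorial (N - c)) :=
        div_nonneg (pow_nonneg hlam.1 _) (Nat.cast_nonneg _)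
      exact mul_le_mul_of_nonneg_left hm hwnn
    have hjunc : lam (n + 1) ^ (N + 1 - n) / (Nat.factorial (N + 1 - n)) * gamma lam n n
          + lam (n + 1) ^ (N - n) / (Nat.factorial (N - n)) * gamma lam n (n + 1)
        ≤ lam (n + 1) ^ (N - n) / (Nat.factorial (N - n)) * gamma lam n n := by
      rw [hgn.1, hgn.2, mul_one, mul_one]
      have he : N + 1 - n = N - n + 1 := by omega
      rw [he]
      have hfle : (Nat.factorial (N - n) : ℝ) ≤ (Nat.factorial (N - n + 1) : ℝ) := by
        exact_mod_cast Nat.factorial_le (Nat.le_succ _)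
      have hfpos : (0 : ℝ) < (Nat.factorial (N - n) : ℝ) := by
        exact_mod_cast Nat.factorial_pos _
      have hkey : lam (n + 1) ^ (N - n + 1) / (Nat.factorial (N - n + 1))
          ≤ lam (n + 1) ^ (N - n + 1) / (Nat.factorial (N - n)) := by
        exact div_le_div_of_nonneg_left (pow_nonneg hlam.1 _) hfpos hfle
      have hps : lam (n + 1) ^ (N - n + 1) / (Nat.factorial (N - n))
          = lam (n + 1) ^ (N - n) / (Nat.factorial (N - n)) * lam (n + 1) := by
        rw [pow_succ]; ring
      nlinarith [hkey, hps]
    linarith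

lemma grand {m : ℕ} (h : eqSystem m lam) :
    ∀ k, 1 ≤ k → k ≤ m →
      (lam k = 1 - gamma lam (k - 1) k) ∧ (0 < lam k ∧ lam k ≤ 1) ∧ gamma lam k k = 1 := by
  intro k
  induction k using Nat.strong_induction_on with
  | _ k IH =>
    intro hk1 hkm
    obtain ⟨n, rfl⟩ : ∃ n, k = n + 1 := ⟨k - 1, by omega⟩
    have Hγ : ∀ j, j ≤ n → gamma lam j j = 1 := by
      intro j hj
      cases j with
      | zero => exact gamma_zero_zero lam
      | succ j => exact (IH (j + 1) (by omega) (by omega) (by omega)).2.2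
    have Hprev : ∀ q, 1 ≤ q → q ≤ n → ∑ v ∈ Vfin (q - 1) (q - 1), wt lam (q - 1) v = 1 := by
      intro q h1 h2
      rw [← gamma_eq_sum lam (q - 1) (q - 1) le_rfl]
      exact Hγ (q - 1) (by omega)
    have hXi := h (n + 1) (by omega) hkm
    have hconv : (∑ᶠ b ∈ Xi (n + 1),
          ∏ j : Fin (n + 1), lam (j.val + 1) ^ (b j) / (Nat.factorial (b j)))
        = ∑ b ∈ XiFin (n + 1), wt lam (n + 1) b := by
      rw [XiFin, finsum_mem_eq_finite_toFinset_sum _ (Xi_finite (n + 1))]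
      rfl
    rw [hconv, main_identity lam n Hprev] at hXi
    have hrec : lam (n + 1) = 1 - gamma lam n (n + 1) := by linarith
    have hγnn : 0 ≤ gamma lam n (n + 1) := by
      apply gamma_nonneg lam n
      intro j h1 h2
      exact le_of_lt (IH j (by omega) h1 (by omega)).2.1.1
    have hγlt : gamma lam n (n + 1) < 1 := by
      cases n with
      | zero =>
        rw [gamma_zero_succ]
        norm_num
      | succ p =>
        have hp := IH (p + 1) (by omega) (by omega) (by omega)
        have hp1 : lam (p + 1) = 1 - gamma lam p (p + 1) := by
          have := hp.1
          rwa [show p + 1 - 1 = p from by omega] at this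
        have hmono := gamma_mono lam p
          (fun j h1 h2 => ⟨le_of_lt (IH j (by omega) h1 (by omega)).2.1.1,
            (IH j (by omega) h1 (by omega)).2.1.2⟩)
          (fun j hj => ⟨Hγ j (by omega), by
            have := (IH (j + 1) (by omega) (by omega) (by omega)).1
            rw [show j + 1 - 1 = j from by omega] at this
            linarith⟩)
          (p + 1) (by omega)
        have hexp := gamma_two_step lam p
        have hγpp := Hγ p (by omega)
        have hLpos := hp.2.1.1
        have hLle := hp.2.1.2
        rw [hγpp] at hexp
        nlinarith [hexp, hmono, hp1, hLpos, hLle]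
    refine ⟨?_, ⟨by linarith, by linarith⟩, ?_⟩
    · rwa [show n + 1 - 1 = n from by omega]
    · rw [gamma_diag_succ, Hγ n le_rfl]
      linarith

end LamAux

/-- The solution of the equation system satisfies `λ_1 = 1`,
`λ_k = 1 − γ(k−1,k) = γ(k−1,k−1) − γ(k−1,k)` for `2 ≤ k ≤ m`, and consequently
`λ_k > 0` for all `k ∈ {1,…,m}`. -/
theorem lam_recurrence (m : ℕ) (hm : 1 ≤ m) (lam : ℕ → ℝ) (h : eqSystem m lam) :
    lam 1 = 1 ∧
    (∀ k, 2 ≤ k → k ≤ m →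
      lam k = 1 - gamma lam (k - 1) k ∧
      lam k = gamma lam (k - 1) (k - 1) - gamma lam (k - 1) k) ∧
    (∀ k, 1 ≤ k → k ≤ m → 0 < lam k) := by
  have hg := LamAux.grand lam h
  refine ⟨?_, ?_, ?_⟩
  · have h1 := (hg 1 le_rfl hm).1
    rw [show (1 : ℕ) - 1 = 0 from rfl] at h1
    rw [h1, LamAux.gamma_zero_succ]
    norm_num
  · intro k hk2 hkm
    have hk := hg k (by omega) hkm
    have hprev := hg (k - 1) (by omega) (by omega)
    refine ⟨hk.1, ?_⟩
    rw [hk.1, hprev.2.2]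
  · intro k h1 h2
    exact (hg k h1 h2).2.1.1
end

section
/- For the single-stopping odds problem with i.i.d. Bernoulli trials X_1,...,X_N each with failure probability q = 1/(1+r), the win probability of the threshold strategy that waits until the sum of remaining odds drops below 1 converges, as r → 0+ with Nr bounded below away from 1, to e^{-1}. -/
open Filter Topology

/-- The optimal single-stopping threshold: the smallest index `i ≥ 1` such that
the sum of the odds from `i` on, `(N − i + 1)·r`, is at most `1 + r`. -/
noncomputable def thr (N : ℕ) (r : ℝ) : ℕ :=
  sInf {i : ℕ | 1 ≤ i ∧ ((N : ℝ) - i + 1) * r ≤ 1 + r}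

/-- Win probability of the single-stopping threshold strategy on `N` i.i.d.
Bernoulli trials with common failure probability `q = 1/(1+r)`:
`q^{N-i+1}·(N−i+1)·r` with `i = thr N r`. -/
noncomputable def winProb (N : ℕ) (r : ℝ) : ℝ :=
  (1 / (1 + r)) ^ (N - thr N r + 1) * (((N : ℝ) - thr N r + 1) * r)

lemma thr_key (N : ℕ) (r : ℝ) (hr : 0 < r) (hNr : 1 + r < N * r) :
    thr N r ≤ N ∧ 1 < ((N - thr N r + 1 : ℕ) : ℝ) * r ∧
      ((N - thr N r + 1 : ℕ) : ℝ) * r ≤ 1 + r := by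
  have hthr : thr N r = sInf {i : ℕ | 1 ≤ i ∧ ((N : ℝ) - i + 1) * r ≤ 1 + r} := rfl
  have hN1 : 1 ≤ N := by
    by_contra h
    push_neg at h
    interval_cases N
    simp at hNr
    linarith
  have hNS : N ∈ {i : ℕ | 1 ≤ i ∧ ((N : ℝ) - i + 1) * r ≤ 1 + r} := by
    refine ⟨hN1, ?_⟩
    have : (N : ℝ) - N + 1 = 1 := by ring
    rw [this]; linarith
  have hle : thr N r ≤ N := Nat.sInf_le hNS
  have hmem : thr N r ∈ {i : ℕ | 1 ≤ i ∧ ((N : ℝ) - i + 1) * r ≤ 1 + r} :=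
    Nat.sInf_mem ⟨N, hNS⟩
  have h1 : 1 ≤ thr N r := hmem.1
  have hne1 : thr N r ≠ 1 := by
    intro h
    have h2 := hmem.2
    rw [h] at h2
    push_cast at h2
    linarith
  have h2 : 2 ≤ thr N r := by omega
  have hlt : thr N r - 1 ∉ {i : ℕ | 1 ≤ i ∧ ((N : ℝ) - i + 1) * r ≤ 1 + r} := by
    rw [hthr]
    exact Nat.notMem_of_lt_sInf (by rw [← hthr]; omega)
  have hlow : 1 + r < ((N : ℝ) - (thr N r - 1 : ℕ) + 1) * r := by
    by_contra h
    push_neg at h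
    exact hlt ⟨by omega, h⟩
  have hcast : ((thr N r - 1 : ℕ) : ℝ) = (thr N r : ℝ) - 1 := by
    push_cast [Nat.cast_sub h1]
    ring
  rw [hcast] at hlow
  have hcastm : ((N - thr N r + 1 : ℕ) : ℝ) = (N : ℝ) - thr N r + 1 := by
    push_cast [Nat.cast_sub hle]
    ring
  refine ⟨hle, ?_, ?_⟩
  · rw [hcastm]; nlinarith
  · rw [hcastm]; have := hmem.2; linarith

/-- For the single-stopping odds problem with i.i.d. trials of common odds `r`,
the win probability of the threshold strategy converges to `e⁻¹` as `r → 0⁺`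
with `N·r` bounded below away from `1`. -/
theorem winProb_tendsto_exp_neg_one (r : ℕ → ℝ) (N : ℕ → ℕ)
    (hr : ∀ n, 0 < r n) (h0 : Tendsto r atTop (𝓝 0))
    (hN : ∃ c : ℝ, 1 < c ∧ ∀ n, c ≤ (N n : ℝ) * r n) :
    Tendsto (fun n => winProb (N n) (r n)) atTop (𝓝 (Real.exp (-1))) := by
  obtain ⟨c, hc1, hc2⟩ := hN
  set a : ℕ → ℝ := fun n => ((N n - thr (N n) (r n) + 1 : ℕ) : ℝ) * r n with ha_def
  have hev : ∀ᶠ n in atTop, r n < c - 1 := h0.eventually (gt_mem_nhds (by linarith))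
  have hkey : ∀ᶠ n in atTop, thr (N n) (r n) ≤ N n ∧ 1 < a n ∧ a n ≤ 1 + r n := by
    filter_upwards [hev] with n hn
    exact thr_key (N n) (r n) (hr n) (by have := hc2 n; linarith)
  -- a tends to 1
  have ha : Tendsto a atTop (𝓝 1) := by
    apply tendsto_of_tendsto_of_tendsto_of_le_of_le' tendsto_const_nhds
      (by simpa using (tendsto_const_nhds.add h0) : Tendsto (fun n => 1 + r n) atTop (𝓝 1))
    · filter_upwards [hkey] with n hn; exact hn.2.1.le
    · filter_upwards [hkey] with n hn; exact hn.2.2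
  -- log(1+r)/r tends to 1
  have hL : Tendsto (fun n => Real.log (1 + r n) / r n) atTop (𝓝 1) := by
    have hderiv : HasDerivAt (fun x : ℝ => Real.log (1 + x)) 1 0 := by
      have h := (Real.hasDerivAt_log (by norm_num : (1:ℝ) + 0 ≠ 0)).comp 0
        ((hasDerivAt_id (0:ℝ)).const_add 1)
      simp at h
      exact h
    have hslope := hasDerivAt_iff_tendsto_slope.mp hderiv
    have hr' : Tendsto r atTop (𝓝[≠] (0:ℝ)) := by
      rw [tendsto_nhdsWithin_iff]
      exact ⟨h0, Eventually.of_forall fun n => (hr n).ne'⟩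
    have := hslope.comp hr'
    refine this.congr fun n => ?_
    simp [slope, Function.comp, Real.log_one, div_eq_inv_mul]
  have hfin : Tendsto (fun n => Real.exp (-(a n * (Real.log (1 + r n) / r n))) * a n)
      atTop (𝓝 (Real.exp (-1))) := by
    have h1 : Tendsto (fun n => -(a n * (Real.log (1 + r n) / r n))) atTop (𝓝 (-1)) := by
      have := (ha.mul hL).neg
      simpa using this
    have h2 := (Real.continuous_exp.tendsto (-1)).comp h1
    have := h2.mul ha
    simpa using this
  refine hfin.congr' ?_
  filter_upwards [hkey] with n hn
  obtain ⟨hle, hgt, hle2⟩ := hn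
  have hrpos := hr n
  have hpos : 0 < 1 + r n := by linarith
  have hcastm : ((N n - thr (N n) (r n) + 1 : ℕ) : ℝ)
      = (N n : ℝ) - thr (N n) (r n) + 1 := by
    push_cast [Nat.cast_sub hle]
    ring
  have hml : a n * (Real.log (1 + r n) / r n)
      = ((N n - thr (N n) (r n) + 1 : ℕ) : ℝ) * Real.log (1 + r n) := by
    simp only [ha_def]
    field_simp
  have hpow : (1 / (1 + r n)) ^ (N n - thr (N n) (r n) + 1)
      = Real.exp (-(a n * (Real.log (1 + r n) / r n))) := by
    rw [hml, ← Real.exp_log (show (0:ℝ) < (1 / (1 + r n)) ^ (N n - thr (N n) (r n) + 1)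
      from pow_pos (by positivity) _)]
    congr 1
    rw [Real.log_pow, one_div, Real.log_inv]
    ring
  show Real.exp (-(a n * (Real.log (1 + r n) / r n))) * a n = winProb (N n) (r n)
  rw [winProb, hpow]
  congr 1
  simp only [ha_def]
  rw [hcastm]
end

section
/- For the odds problem with 2 stopping chances and threshold strategy with blocks B_2, B_1 (indices in [i^{(2)}, i^{(1)}) and [i^{(1)}, N] respectively), the probability of obtaining the last success equals (∏_{i∈B_1} q_i)(Σ_{i∈B_1} r_i) + (∏_{i∈B_2∪B_1} q_i)(Σ_{i∈B_2} r_i + Σ_{{i,i'}⊆B_1} r_i r_{i'}). -/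
open Finset

lemma sum_pi_bool' {ι : Type*} [Fintype ι] [DecidableEq ι] (f : ι → Bool → ℝ) :
    ∑ x : ι → Bool, ∏ i, f i (x i) = ∏ i, (f i true + f i false) := by
  rw [← Fintype.prod_sum]
  exact Finset.prod_congr rfl fun i _ => by rw [Fintype.sum_bool]

lemma core_sum_indicator {ι : Type*} [Fintype ι] [DecidableEq ι] (f : ι → Bool → ℝ)
    (A t : Finset ι) (ht : t ⊆ A) :
    (∑ x : ι → Bool, if A.filter (fun i => x i) = t then ∏ i, f i (x i) else 0)
    = ((∏ i ∈ t, f i true) * ∏ i ∈ A \ t, f i false)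
        * ∏ i ∈ Aᶜ, (f i true + f i false) := by
  set g : ι → Bool → ℝ := fun i b =>
    if i ∈ A ∧ b ≠ decide (i ∈ t) then 0 else f i b with hg
  have key : ∀ x : ι → Bool,
      (if A.filter (fun i => x i) = t then ∏ i, f i (x i) else 0)
        = ∏ i, g i (x i) := by
    intro x
    by_cases h : A.filter (fun i => x i) = t
    · rw [if_pos h]
      refine Finset.prod_congr rfl fun i _ => ?_
      by_cases hiA : i ∈ A
      · have : x i = decide (i ∈ t) := by
          have hext := Finset.ext_iff.mp h i
          simp only [Finset.mem_filter] at hext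
          by_cases hxi : x i = true
          · simp [hxi, (hext.mp ⟨hiA, hxi⟩)]
          · simp only [Bool.not_eq_true] at hxi
            have hnt : i ∉ t := fun hit => by
              have := (hext.mpr hit).2
              rw [hxi] at this
              exact Bool.false_ne_true this
            simp [hxi, hnt]
        simp [hg, this]
      · simp [hg, hiA]
    · rw [if_neg h]
      have : ∃ i ∈ A, x i ≠ decide (i ∈ t) := by
        by_contra hc
        push_neg at hc
        apply h
        ext a
        simp only [Finset.mem_filter]
        constructor
        · rintro ⟨ha, hxa⟩
          have := hc a ha
          rw [hxa] at this
          simpa using this.symm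
        · intro hat
          refine ⟨ht hat, ?_⟩
          rw [hc a (ht hat)]
          simpa using hat
      obtain ⟨i, hiA, hi⟩ := this
      refine (Finset.prod_eq_zero (Finset.mem_univ i) ?_).symm
      simp only [hg]
      rw [if_pos ⟨hiA, hi⟩]
  rw [Finset.sum_congr rfl fun x _ => key x, sum_pi_bool']
  rw [← Finset.prod_mul_prod_compl A]
  congr 1
  · rw [← Finset.prod_sdiff ht (f := fun i => g i true + g i false), mul_comm]
    congr 1
    · exact Finset.prod_congr rfl fun i hi => by simp [hg, ht hi, hi]
    · refine Finset.prod_congr rfl fun i hi => ?_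
      obtain ⟨hiA, hit⟩ := Finset.mem_sdiff.mp hi
      simp [hg, hiA, hit]
  · refine Finset.prod_congr rfl fun i hi => ?_
    simp only [Finset.mem_compl] at hi
    simp [hg, hi]

lemma gen_sum_indicator {ι : Type*} [Fintype ι] [DecidableEq ι] (f : ι → Bool → ℝ)
    (A : Finset ι) (T : Finset (Finset ι)) (hT : ∀ t ∈ T, t ⊆ A)
    (h1 : ∀ i, f i true + f i false = 1) :
    (∑ x : ι → Bool, if A.filter (fun i => x i) ∈ T then ∏ i, f i (x i) else 0)
    = ∑ t ∈ T, (∏ i ∈ t, f i true) * ∏ i ∈ A \ t, f i false := by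
  have step : ∀ x : ι → Bool,
      (if A.filter (fun i => x i) ∈ T then ∏ i, f i (x i) else 0)
      = ∑ t ∈ T, if A.filter (fun i => x i) = t then ∏ i, f i (x i) else 0 := by
    intro x
    rw [Finset.sum_ite_eq T (A.filter fun i => x i) (fun _ => ∏ i, f i (x i))]
  rw [Finset.sum_congr rfl fun x _ => step x, Finset.sum_comm]
  refine Finset.sum_congr rfl fun t htT => ?_
  rw [core_sum_indicator f A t (hT t htT)]
  simp [h1]

/-- Number of successes of the realization `x` inside the block `B`. -/
def cnt {N : ℕ} (B : Finset (Fin N)) (x : Fin N → Bool) : ℕ :=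
  (B.filter fun i => x i).card

/-- For the odds problem with 2 stopping chances and thresholds
`1 ≤ i₂ ≤ i₁ ≤ N` (blocks `B₂ = [i₂, i₁)`, `B₁ = [i₁, N]`, indices written with
subscripts `1,…,N`, so `i : Fin N` has subscript `i+1`), the probability of
obtaining the last success equals
`(∏_{i∈B₁} q_i)(∑_{i∈B₁} r_i) + (∏_{i∈B₂∪B₁} q_i)(∑_{i∈B₂} r_i + ∑_{{i,i'}⊆B₁} r_i r_{i'})`.
A realization wins iff its pattern `(b₂,b₁)` of block success counts has a left
truncated subvector in `{(1),(1,0),(0,2)}`. -/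
theorem win_prob_two_stops (N : ℕ) (p : Fin N → ℝ) (hp : ∀ i, 0 < p i ∧ p i < 1)
    (i2 i1 : ℕ) (h2 : 1 ≤ i2) (h21 : i2 ≤ i1) (h1N : i1 ≤ N)
    (B1 B2 : Finset (Fin N))
    (hB1 : B1 = Finset.univ.filter fun i => i1 ≤ i.val + 1)
    (hB2 : B2 = Finset.univ.filter fun i => i2 ≤ i.val + 1 ∧ i.val + 1 < i1)
    (hcard : 2 ≤ B1.card) :
    (∑ x : Fin N → Bool,
      if cnt B1 x = 1 ∨ (cnt B2 x = 1 ∧ cnt B1 x = 0) ∨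
          (cnt B2 x = 0 ∧ cnt B1 x = 2)
      then ∏ i, (if x i then p i else 1 - p i) else 0)
    = (∏ i ∈ B1, (1 - p i)) * (∑ i ∈ B1, p i / (1 - p i))
      + (∏ i ∈ B2 ∪ B1, (1 - p i)) *
          ((∑ i ∈ B2, p i / (1 - p i))
            + ∑ s ∈ B1.powersetCard 2, ∏ i ∈ s, p i / (1 - p i)) := by
  have hqne : ∀ i, (1:ℝ) - p i ≠ 0 := fun i => by have := (hp i).2; intro h; linarith
  have hd : Disjoint B2 B1 := by
    subst hB1 hB2
    simp only [Finset.disjoint_left, Finset.mem_filter, Finset.mem_univ, true_and]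
    intro a ha hb
    omega
  have hsplit : ∀ x : Fin N → Bool,
      (if cnt B1 x = 1 ∨ (cnt B2 x = 1 ∧ cnt B1 x = 0) ∨ (cnt B2 x = 0 ∧ cnt B1 x = 2)
        then ∏ i, (if x i then p i else 1 - p i) else 0)
      = (if cnt B1 x = 1 then ∏ i, (if x i then p i else 1 - p i) else 0)
        + (if cnt B2 x = 1 ∧ cnt B1 x = 0 then ∏ i, (if x i then p i else 1 - p i) else 0)
        + (if cnt B2 x = 0 ∧ cnt B1 x = 2 then ∏ i, (if x i then p i else 1 - p i) else 0) := by
    intro x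
    by_cases h1 : cnt B1 x = 1
    · have hA : ¬(cnt B2 x = 1 ∧ cnt B1 x = 0) := fun h => by omega
      have hB : ¬(cnt B2 x = 0 ∧ cnt B1 x = 2) := fun h => by omega
      rw [if_pos (Or.inl h1), if_pos h1, if_neg hA, if_neg hB]; ring
    · by_cases hA : cnt B2 x = 1 ∧ cnt B1 x = 0
      · have hB : ¬(cnt B2 x = 0 ∧ cnt B1 x = 2) := fun h => by omega
        rw [if_pos (Or.inr (Or.inl hA)), if_neg h1, if_pos hA, if_neg hB]; ring
      · by_cases hB : cnt B2 x = 0 ∧ cnt B1 x = 2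
        · rw [if_pos (Or.inr (Or.inr hB)), if_neg h1, if_neg hA, if_pos hB]; ring
        · rw [if_neg (by tauto), if_neg h1, if_neg hA, if_neg hB]; ring
  have e1 : ∀ x : Fin N → Bool,
      cnt B1 x = 1 ↔ B1.filter (fun i => x i) ∈ B1.powersetCard 1 := by
    intro x
    rw [Finset.mem_powersetCard]
    exact ⟨fun h => ⟨Finset.filter_subset _ _, h⟩, fun h => h.2⟩
  have e2 : ∀ x : Fin N → Bool,
      (cnt B2 x = 1 ∧ cnt B1 x = 0) ↔
        (B2 ∪ B1).filter (fun i => x i) ∈ B2.powersetCard 1 := by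
    intro x
    rw [Finset.filter_union, Finset.mem_powersetCard]
    simp only [cnt]
    constructor
    · rintro ⟨hc2, hc1⟩
      rw [Finset.card_eq_zero] at hc1
      rw [hc1, Finset.union_empty]
      exact ⟨Finset.filter_subset _ _, hc2⟩
    · rintro ⟨hsub, hcard1⟩
      have hs1 : B1.filter (fun i => x i) = ∅ := by
        rw [← Finset.subset_empty]
        intro a ha
        have haB2 : a ∈ B2 := hsub (Finset.mem_union_right _ ha)
        have haB1 : a ∈ B1 := Finset.mem_of_mem_filter a ha
        exact absurd haB1 (Finset.disjoint_left.mp hd haB2)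
      rw [hs1, Finset.union_empty] at hcard1
      exact ⟨hcard1, by rw [hs1, Finset.card_empty]⟩
  have e3 : ∀ x : Fin N → Bool,
      (cnt B2 x = 0 ∧ cnt B1 x = 2) ↔
        (B2 ∪ B1).filter (fun i => x i) ∈ B1.powersetCard 2 := by
    intro x
    rw [Finset.filter_union, Finset.mem_powersetCard]
    simp only [cnt]
    constructor
    · rintro ⟨hc2, hc1⟩
      rw [Finset.card_eq_zero] at hc2
      rw [hc2, Finset.empty_union]
      exact ⟨Finset.filter_subset _ _, hc1⟩
    · rintro ⟨hsub, hcard1⟩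
      have hs2 : B2.filter (fun i => x i) = ∅ := by
        rw [← Finset.subset_empty]
        intro a ha
        have haB1 : a ∈ B1 := hsub (Finset.mem_union_left _ ha)
        have haB2 : a ∈ B2 := Finset.mem_of_mem_filter a ha
        exact absurd haB1 (Finset.disjoint_left.mp hd haB2)
      rw [hs2, Finset.empty_union] at hcard1
      exact ⟨by rw [hs2, Finset.card_empty], hcard1⟩
  have key1 := gen_sum_indicator (fun i b => if b then p i else 1 - p i) B1
      (B1.powersetCard 1)
      (fun t ht => (Finset.mem_powersetCard.mp ht).1) (fun i => by simp)
  have key2 := gen_sum_indicator (fun i b => if b then p i else 1 - p i) (B2 ∪ B1)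
      (B2.powersetCard 1)
      (fun t ht => subset_trans (Finset.mem_powersetCard.mp ht).1 Finset.subset_union_left)
      (fun i => by simp)
  have key3 := gen_sum_indicator (fun i b => if b then p i else 1 - p i) (B2 ∪ B1)
      (B1.powersetCard 2)
      (fun t ht => subset_trans (Finset.mem_powersetCard.mp ht).1 Finset.subset_union_right)
      (fun i => by simp)
  simp only [if_true, Bool.false_eq_true, if_false] at key1 key2 key3
  have hdiv : ∀ (a q P : ℝ), q ≠ 0 → (q * P) * (a / q) = a * P := by
    intro a q P hq
    rw [mul_comm, ← mul_assoc, div_mul_cancel₀ _ hq]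
  have T1 : ∑ t ∈ B1.powersetCard 1, (∏ i ∈ t, p i) * ∏ i ∈ B1 \ t, (1 - p i)
      = (∏ i ∈ B1, (1 - p i)) * ∑ i ∈ B1, p i / (1 - p i) := by
    rw [Finset.powersetCard_one, Finset.sum_map, Finset.mul_sum]
    refine Finset.sum_congr rfl fun j hj => ?_
    simp only [Function.Embedding.coeFn_mk, Finset.prod_singleton]
    rw [Finset.prod_eq_mul_prod_sdiff_singleton_of_mem hj (fun i => 1 - p i)]
    exact (hdiv (p j) (1 - p j) _ (hqne j)).symm
  have T2 : ∑ t ∈ B2.powersetCard 1, (∏ i ∈ t, p i) * ∏ i ∈ (B2 ∪ B1) \ t, (1 - p i)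
      = (∏ i ∈ B2 ∪ B1, (1 - p i)) * ∑ i ∈ B2, p i / (1 - p i) := by
    rw [Finset.powersetCard_one, Finset.sum_map, Finset.mul_sum]
    refine Finset.sum_congr rfl fun j hj => ?_
    simp only [Function.Embedding.coeFn_mk, Finset.prod_singleton]
    rw [Finset.prod_eq_mul_prod_sdiff_singleton_of_mem (Finset.mem_union_left _ hj)
      (fun i => 1 - p i)]
    exact (hdiv (p j) (1 - p j) _ (hqne j)).symm
  have T3 : ∑ t ∈ B1.powersetCard 2, (∏ i ∈ t, p i) * ∏ i ∈ (B2 ∪ B1) \ t, (1 - p i)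
      = (∏ i ∈ B2 ∪ B1, (1 - p i)) * ∑ t ∈ B1.powersetCard 2, ∏ i ∈ t, p i / (1 - p i) := by
    rw [Finset.mul_sum]
    refine Finset.sum_congr rfl fun t ht => ?_
    have hsubA : t ⊆ B2 ∪ B1 :=
      subset_trans (Finset.mem_powersetCard.mp ht).1 Finset.subset_union_right
    rw [← Finset.prod_sdiff hsubA (f := fun i => 1 - p i), mul_assoc]
    have hpr : (∏ i ∈ t, (1 - p i)) * ∏ i ∈ t, (p i / (1 - p i)) = ∏ i ∈ t, p i := by
      rw [← Finset.prod_mul_distrib]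
      exact Finset.prod_congr rfl fun i _ => by
        rw [mul_comm, div_mul_cancel₀ _ (hqne i)]
    rw [hpr, mul_comm]
  calc (∑ x : Fin N → Bool,
      if cnt B1 x = 1 ∨ (cnt B2 x = 1 ∧ cnt B1 x = 0) ∨ (cnt B2 x = 0 ∧ cnt B1 x = 2)
      then ∏ i, (if x i then p i else 1 - p i) else 0)
      = (∑ x : Fin N → Bool, if cnt B1 x = 1 then ∏ i, (if x i then p i else 1 - p i) else 0)
        + (∑ x : Fin N → Bool, if cnt B2 x = 1 ∧ cnt B1 x = 0
            then ∏ i, (if x i then p i else 1 - p i) else 0)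
        + (∑ x : Fin N → Bool, if cnt B2 x = 0 ∧ cnt B1 x = 2
            then ∏ i, (if x i then p i else 1 - p i) else 0) := by
        rw [Finset.sum_congr rfl fun x _ => hsplit x, Finset.sum_add_distrib,
          Finset.sum_add_distrib]
    _ = (∑ x : Fin N → Bool, if B1.filter (fun i => x i) ∈ B1.powersetCard 1
            then ∏ i, (if x i then p i else 1 - p i) else 0)
        + (∑ x : Fin N → Bool, if (B2 ∪ B1).filter (fun i => x i) ∈ B2.powersetCard 1
            then ∏ i, (if x i then p i else 1 - p i) else 0)
        + (∑ x : Fin N → Bool, if (B2 ∪ B1).filter (fun i => x i) ∈ B1.powersetCard 2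
            then ∏ i, (if x i then p i else 1 - p i) else 0) := by
        congr 1
        · congr 1
          · exact Finset.sum_congr rfl fun x _ => if_congr (e1 x) rfl rfl
          · exact Finset.sum_congr rfl fun x _ => if_congr (e2 x) rfl rfl
        · exact Finset.sum_congr rfl fun x _ => if_congr (e3 x) rfl rfl
    _ = _ := by
        rw [key1, key2, key3, T1, T2, T3]
        ring
end

section
/- In the classical secretary problem setting with P[X_i = 1] = 1/i for i = 2,...,N (so q_i = 1 − 1/i and odds r_i = 1/(i−1)), if thresholds i_N^{(k)} satisfy i_N^{(k)} → ∞ and Σ_{i ∈ B_k(N)} r_i → λ_k > 0 as N → ∞, then ∏_{i ∈ B_k(N)} q_i → e^{-λ_k} and for every b ∈ {1,...,m}, the elementary symmetric polynomial f^b(B_k(N)) of the odds over B_k(N) converges to λ_k^b/b!. -/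
open Filter Topology Finset

private lemma esymm_nonneg (r : ℕ → ℝ) (b : ℕ) (s : Finset ℕ) (hr : ∀ i ∈ s, 0 ≤ r i) :
    0 ≤ ∑ t ∈ s.powersetCard b, ∏ j ∈ t, r j := by
  refine Finset.sum_nonneg fun t ht => Finset.prod_nonneg fun j hj => ?_
  exact hr j ((Finset.mem_powersetCard.1 ht).1 hj)

/-- Key identity: `∑ i ∈ s, r i * e_b(s \ {i}) = (b+1) e_{b+1}(s)`. -/
private lemma esymm_erase_identity (r : ℕ → ℝ) (b : ℕ) (s : Finset ℕ) :
    ∑ i ∈ s, r i * ∑ t ∈ (s.erase i).powersetCard b, ∏ j ∈ t, r j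
      = ((b : ℝ) + 1) * ∑ t ∈ s.powersetCard (b + 1), ∏ j ∈ t, r j := by
  have hRHS : ((b : ℝ) + 1) * ∑ t ∈ s.powersetCard (b + 1), ∏ j ∈ t, r j
      = ∑ t ∈ s.powersetCard (b + 1), ∑ i ∈ t, r i * ∏ j ∈ t.erase i, r j := by
    rw [Finset.mul_sum]
    refine Finset.sum_congr rfl fun t ht => ?_
    have hcard : t.card = b + 1 := (Finset.mem_powersetCard.1 ht).2
    have : ∀ i ∈ t, r i * ∏ j ∈ t.erase i, r j = ∏ j ∈ t, r j := fun i hi =>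
      Finset.mul_prod_erase t r hi
    rw [Finset.sum_congr rfl this, Finset.sum_const, hcard]
    push_cast
    ring
  rw [hRHS]
  have hL : ∑ i ∈ s, r i * ∑ t ∈ (s.erase i).powersetCard b, ∏ j ∈ t, r j
      = ∑ p ∈ s.sigma (fun i => (s.erase i).powersetCard b),
          r p.1 * ∏ j ∈ p.2, r j := by
    rw [Finset.sum_sigma]
    exact Finset.sum_congr rfl fun i _ => Finset.mul_sum _ _ _
  have hR : ∑ t ∈ s.powersetCard (b + 1), ∑ i ∈ t, r i * ∏ j ∈ t.erase i, r j
      = ∑ q ∈ (s.powersetCard (b + 1)).sigma (fun t => t),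
          r q.2 * ∏ j ∈ q.1.erase q.2, r j := by
    rw [Finset.sum_sigma]
  rw [hL, hR]
  refine Finset.sum_bij' (fun p hp => (⟨insert p.1 p.2, p.1⟩ : Σ _ : Finset ℕ, ℕ))
    (fun q hq => (⟨q.2, q.1.erase q.2⟩ : Σ _ : ℕ, Finset ℕ)) ?_ ?_ ?_ ?_ ?_
  · rintro ⟨i, t⟩ hp
    rw [Finset.mem_sigma] at hp
    obtain ⟨hi, ht⟩ := hp
    rw [Finset.mem_powersetCard] at ht
    have hit : i ∉ t := fun h => (Finset.mem_erase.1 (ht.1 h)).1 rfl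
    rw [Finset.mem_sigma, Finset.mem_powersetCard]
    refine ⟨⟨Finset.insert_subset hi (ht.1.trans (Finset.erase_subset _ _)), ?_⟩,
      Finset.mem_insert_self _ _⟩
    rw [Finset.card_insert_of_notMem hit, ht.2]
  · rintro ⟨u, i⟩ hq
    rw [Finset.mem_sigma] at hq
    obtain ⟨hu, hi⟩ := hq
    rw [Finset.mem_powersetCard] at hu
    rw [Finset.mem_sigma, Finset.mem_powersetCard]
    refine ⟨hu.1 hi, Finset.erase_subset_erase _ hu.1, ?_⟩
    rw [Finset.card_erase_of_mem hi, hu.2]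
    omega
  · rintro ⟨i, t⟩ hp
    rw [Finset.mem_sigma] at hp
    obtain ⟨hi, ht⟩ := hp
    rw [Finset.mem_powersetCard] at ht
    have hit : i ∉ t := fun h => (Finset.mem_erase.1 (ht.1 h)).1 rfl
    simp [Finset.erase_insert hit]
  · rintro ⟨u, i⟩ hq
    rw [Finset.mem_sigma] at hq
    simp [Finset.insert_erase hq.2]
  · rintro ⟨i, t⟩ hp
    rw [Finset.mem_sigma] at hp
    obtain ⟨hi, ht⟩ := hp
    rw [Finset.mem_powersetCard] at ht
    have hit : i ∉ t := fun h => (Finset.mem_erase.1 (ht.1 h)).1 rfl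
    simp [Finset.erase_insert hit]

private lemma esymm_upper (r : ℕ → ℝ) :
    ∀ (b : ℕ) (s : Finset ℕ), (∀ i ∈ s, 0 ≤ r i) →
      (b.factorial : ℝ) * ∑ t ∈ s.powersetCard b, ∏ j ∈ t, r j ≤ (∑ i ∈ s, r i) ^ b := by
  intro b
  induction b with
  | zero => intro s _; simp
  | succ b ih =>
    intro s hr
    have hS0 : 0 ≤ ∑ i ∈ s, r i := Finset.sum_nonneg hr
    have key := esymm_erase_identity r b s
    have hfact : ((b + 1).factorial : ℝ) = ((b : ℝ) + 1) * (b.factorial : ℝ) := by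
      rw [Nat.factorial_succ]; push_cast; ring
    calc ((b + 1).factorial : ℝ) * ∑ t ∈ s.powersetCard (b + 1), ∏ j ∈ t, r j
        = (b.factorial : ℝ) * (((b : ℝ) + 1) * ∑ t ∈ s.powersetCard (b + 1), ∏ j ∈ t, r j) := by
          rw [hfact]; ring
      _ = ∑ i ∈ s, r i * ((b.factorial : ℝ) * ∑ t ∈ (s.erase i).powersetCard b, ∏ j ∈ t, r j) := by
          rw [← key, Finset.mul_sum]; refine Finset.sum_congr rfl fun i hi => ?_; ring
      _ ≤ ∑ i ∈ s, r i * (∑ i ∈ s, r i) ^ b := by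
          refine Finset.sum_le_sum fun i hi => ?_
          refine mul_le_mul_of_nonneg_left ?_ (hr i hi)
          have h1 : (b.factorial : ℝ) * ∑ t ∈ (s.erase i).powersetCard b, ∏ j ∈ t, r j
              ≤ (∑ j ∈ s.erase i, r j) ^ b :=
            ih (s.erase i) fun j hj => hr j (Finset.mem_of_mem_erase hj)
          refine h1.trans (pow_le_pow_left₀ ?_ ?_ b)
          · exact Finset.sum_nonneg fun j hj => hr j (Finset.mem_of_mem_erase hj)
          · exact Finset.sum_le_sum_of_subset_of_nonneg (Finset.erase_subset _ _)
              fun j hj _ => hr j hj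
      _ = (∑ i ∈ s, r i) ^ (b + 1) := by rw [← Finset.sum_mul, pow_succ]; ring

private lemma esymm_lower (r : ℕ → ℝ) (ε : ℝ) (hε : 0 ≤ ε) :
    ∀ (b : ℕ) (s : Finset ℕ), (∀ i ∈ s, 0 ≤ r i ∧ r i ≤ ε) →
      (b : ℝ) * ε ≤ ∑ i ∈ s, r i →
      ∏ j ∈ Finset.range b, ((∑ i ∈ s, r i) - (j : ℝ) * ε)
        ≤ (b.factorial : ℝ) * ∑ t ∈ s.powersetCard b, ∏ j ∈ t, r j := by
  intro b
  induction b with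
  | zero => intro s _ _; simp
  | succ b ih =>
    intro s hr hbe
    set S := ∑ i ∈ s, r i with hSdef
    have key := esymm_erase_identity r b s
    have hfact : ((b + 1).factorial : ℝ) = ((b : ℝ) + 1) * (b.factorial : ℝ) := by
      rw [Nat.factorial_succ]; push_cast; ring
    have hstep : ∀ i ∈ s,
        ∏ j ∈ Finset.range b, (S - ((j : ℝ) + 1) * ε)
          ≤ (b.factorial : ℝ) * ∑ t ∈ (s.erase i).powersetCard b, ∏ j ∈ t, r j := by
      intro i hi
      have hsub : ∑ j ∈ s.erase i, r j = S - r i := by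
        have := Finset.add_sum_erase s r hi
        rw [hSdef]; linarith
      have hcond : (b : ℝ) * ε ≤ ∑ j ∈ s.erase i, r j := by
        rw [hsub]
        have := (hr i hi).2
        push_cast at hbe ⊢
        linarith
      have h1 := ih (s.erase i) (fun j hj => hr j (Finset.mem_of_mem_erase hj)) hcond
      refine le_trans ?_ h1
      rw [hsub]
      refine Finset.prod_le_prod (fun j hj => ?_) (fun j hj => ?_)
      · rw [Finset.mem_range] at hj
        have : ((j : ℝ) + 1) * ε ≤ ((b : ℝ) + 1) * ε := by
          have : (j : ℝ) + 1 ≤ (b : ℝ) + 1 := by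
            have : (j : ℝ) ≤ (b : ℝ) := by exact_mod_cast Nat.le_of_lt_succ (Nat.lt_succ_of_lt hj)
            linarith
          exact mul_le_mul_of_nonneg_right this hε
        push_cast at hbe
        linarith
      · have := (hr i hi).2
        linarith
    have hS0 : 0 ≤ S := le_trans (by positivity) hbe
    calc ∏ j ∈ Finset.range (b + 1), (S - (j : ℝ) * ε)
        = (∏ j ∈ Finset.range b, (S - ((j : ℝ) + 1) * ε)) * S := by
          have hc : ∀ j : ℕ, S - (((j : ℕ) + 1 : ℕ) : ℝ) * ε = S - ((j : ℝ) + 1) * ε := by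
            intro j; push_cast; ring
          rw [Finset.prod_range_succ' (fun j => S - (j : ℝ) * ε) b]
          simp only [hc, Nat.cast_zero, zero_mul, sub_zero]
      _ = ∑ i ∈ s, r i * ∏ j ∈ Finset.range b, (S - ((j : ℝ) + 1) * ε) := by
          rw [← Finset.sum_mul, ← hSdef]; ring
      _ ≤ ∑ i ∈ s, r i * ((b.factorial : ℝ) * ∑ t ∈ (s.erase i).powersetCard b, ∏ j ∈ t, r j) := by
          refine Finset.sum_le_sum fun i hi => ?_
          exact mul_le_mul_of_nonneg_left (hstep i hi) (hr i hi).1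
      _ = (b.factorial : ℝ) * ∑ i ∈ s, r i * ∑ t ∈ (s.erase i).powersetCard b, ∏ j ∈ t, r j := by
          rw [Finset.mul_sum]; refine Finset.sum_congr rfl fun i hi => ?_; ring
      _ = ((b + 1).factorial : ℝ) * ∑ t ∈ s.powersetCard (b + 1), ∏ j ∈ t, r j := by
          rw [key, hfact]; ring

/-- Secretary-problem block asymptotics: with odds `r_i = 1/(i−1)` and failure
probabilities `q_i = 1 − 1/i`, if the block `B_k(N) = [i_N^{(k)}, i_N^{(k-1)})`
(given by endpoint sequences `a N = i_N^{(k)}` and `c N = i_N^{(k-1)}`) satisfies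
`a N → ∞` and `∑_{i∈B_k(N)} r_i → λ_k > 0`, then `∏_{i∈B_k(N)} q_i → e^{-λ_k}`
and for every `b ∈ {1,…,m}` the elementary symmetric polynomial `f^b` of the
odds over `B_k(N)` converges to `λ_k^b/b!`. -/
theorem secretary_block_limits (a c : ℕ → ℕ) (lam : ℝ) (hlam : 0 < lam)
    (hac : ∀ N, 2 ≤ a N ∧ a N ≤ c N)
    (ha : Tendsto (fun N => (a N : ℝ)) atTop atTop)
    (hsum : Tendsto (fun N => ∑ i ∈ Finset.Ico (a N) (c N), (1 : ℝ) / ((i : ℝ) - 1))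
      atTop (𝓝 lam)) :
    Tendsto (fun N => ∏ i ∈ Finset.Ico (a N) (c N), (1 - 1 / (i : ℝ))) atTop
        (𝓝 (Real.exp (-lam))) ∧
      ∀ m b : ℕ, 1 ≤ b → b ≤ m →
        Tendsto
          (fun N => ∑ s ∈ (Finset.Ico (a N) (c N)).powersetCard b,
            ∏ i ∈ s, (1 : ℝ) / ((i : ℝ) - 1))
          atTop (𝓝 (lam ^ b / (Nat.factorial b : ℝ))) := by
  set r : ℕ → ℝ := fun i => (1 : ℝ) / ((i : ℝ) - 1) with hrdef
  set S : ℕ → ℝ := fun N => ∑ i ∈ Finset.Ico (a N) (c N), r i with hSdef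
  set ε : ℕ → ℝ := fun N => (1 : ℝ) / ((a N : ℝ) - 1) with hεdef
  have haN2 : ∀ N, (2 : ℝ) ≤ (a N : ℝ) := fun N => by exact_mod_cast (hac N).1
  have haN1 : ∀ N, (0 : ℝ) < (a N : ℝ) - 1 := fun N => by have := haN2 N; linarith
  have hε0 : ∀ N, 0 < ε N := fun N => by
    simp only [hεdef]; exact one_div_pos.mpr (haN1 N)
  have hεle1 : ∀ N, ε N ≤ 1 := fun N => by
    have h1 : (1 : ℝ) ≤ (a N : ℝ) - 1 := by have := haN2 N; linarith
    simp only [hεdef]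
    rw [div_le_one (haN1 N)]; linarith
  -- membership facts
  have hmem : ∀ N, ∀ i ∈ Finset.Ico (a N) (c N), 0 < r i ∧ r i ≤ ε N := by
    intro N i hi
    rw [Finset.mem_Ico] at hi
    have hia : (a N : ℝ) ≤ (i : ℝ) := by exact_mod_cast hi.1
    have hi1 : (0 : ℝ) < (i : ℝ) - 1 := by have := haN2 N; linarith
    constructor
    · simp only [hrdef]; exact one_div_pos.mpr hi1
    · simp only [hrdef, hεdef]
      apply one_div_le_one_div_of_le (haN1 N)
      linarith
  have hr_nonneg : ∀ N, ∀ i ∈ Finset.Ico (a N) (c N), 0 ≤ r i :=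
    fun N i hi => le_of_lt (hmem N i hi).1
  -- ε → 0
  have hεto0 : Tendsto ε atTop (𝓝 0) := by
    have h1 : Tendsto (fun N => (a N : ℝ) - 1) atTop atTop :=
      tendsto_atTop_add_const_right _ _ ha
    simp only [hεdef, one_div]; exact h1.inv_tendsto_atTop
  have hS : Tendsto S atTop (𝓝 lam) := hsum
  have hS_nonneg : ∀ N, 0 ≤ S N := fun N => Finset.sum_nonneg (hr_nonneg N)
  constructor
  · -- Part 1 : product of q_i
    set g : ℕ → ℝ := fun N => ∑ i ∈ Finset.Ico (a N) (c N), Real.log (1 + r i) with hgdef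
    have hglam : Tendsto g atTop (𝓝 lam) := by
      have hup : ∀ N, g N ≤ S N := by
        intro N
        refine Finset.sum_le_sum fun i hi => ?_
        have h0 : 0 < 1 + r i := by have := (hmem N i hi).1; linarith
        have := Real.log_le_sub_one_of_pos h0
        linarith
      have hlo : ∀ N, S N - ε N * S N ≤ g N := by
        intro N
        have : S N - ε N * S N = ∑ i ∈ Finset.Ico (a N) (c N), (r i - ε N * r i) := by
          rw [Finset.sum_sub_distrib, ← Finset.mul_sum]
        rw [this]
        refine Finset.sum_le_sum fun i hi => ?_
        obtain ⟨hr0, hrε⟩ := hmem N i hi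
        have h0 : 0 < 1 + r i := by linarith
        have hlog : 1 - (1 + r i)⁻¹ ≤ Real.log (1 + r i) := Real.one_sub_inv_le_log_of_pos h0
        have heq : 1 - (1 + r i)⁻¹ = r i / (1 + r i) := by field_simp; ring
        rw [heq] at hlog
        refine le_trans ?_ hlog
        rw [le_div_iff₀ h0]
        nlinarith [mul_le_mul_of_nonneg_right hrε (le_of_lt hr0), sq_nonneg (r i),
          mul_nonneg (le_of_lt (hε0 N)) (mul_nonneg (le_of_lt hr0) (le_of_lt hr0))]
      have hlo_lim : Tendsto (fun N => S N - ε N * S N) atTop (𝓝 lam) := by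
        have := hS.sub (hεto0.mul hS)
        simpa using this
      exact tendsto_of_tendsto_of_tendsto_of_le_of_le hlo_lim hS hlo hup
    have hprod : ∀ N, ∏ i ∈ Finset.Ico (a N) (c N), (1 - 1 / (i : ℝ)) = Real.exp (-g N) := by
      intro N
      rw [hgdef]
      rw [← Finset.sum_neg_distrib, Real.exp_sum]
      refine Finset.prod_congr rfl fun i hi => ?_
      rw [Finset.mem_Ico] at hi
      have hia : (a N : ℝ) ≤ (i : ℝ) := by exact_mod_cast hi.1
      have hi1 : (0 : ℝ) < (i : ℝ) - 1 := by have := haN2 N; linarith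
      have hi0 : (0 : ℝ) < (i : ℝ) := by linarith
      have h0 : 0 < 1 + r i := by
        have : 0 < r i := by simp only [hrdef]; exact one_div_pos.mpr hi1
        linarith
      have hne : (i : ℝ) ≠ 0 := ne_of_gt hi0
      have hne1 : (i : ℝ) - 1 ≠ 0 := ne_of_gt hi1
      rw [Real.exp_neg, Real.exp_log h0]
      simp only [hrdef]
      rw [show (1 : ℝ) + 1 / ((i : ℝ) - 1) = (i : ℝ) / ((i : ℝ) - 1) by
        rw [eq_div_iff hne1]; field_simp; ring]
      rw [show (1 : ℝ) - 1 / (i : ℝ) = ((i : ℝ) - 1) / (i : ℝ) by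
        rw [eq_div_iff hne]; field_simp]
      rw [inv_div]
    have : Tendsto (fun N => Real.exp (-g N)) atTop (𝓝 (Real.exp (-lam))) :=
      (Real.continuous_exp.tendsto _).comp hglam.neg
    exact this.congr fun N => (hprod N).symm
  · -- Part 2 : elementary symmetric functions
    intro m b hb1 hbm
    set F : ℕ → ℝ := fun N =>
      ∑ t ∈ (Finset.Ico (a N) (c N)).powersetCard b, ∏ i ∈ t, r i with hFdef
    have hbfac : (0 : ℝ) < (b.factorial : ℝ) := by exact_mod_cast b.factorial_pos
    have hup : ∀ N, F N ≤ S N ^ b / (b.factorial : ℝ) := by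
      intro N
      rw [le_div_iff₀ hbfac]
      have h2 : (b.factorial : ℝ) * F N ≤ S N ^ b :=
        esymm_upper r b (Finset.Ico (a N) (c N)) (hr_nonneg N)
      linarith
    have hlo : ∀ᶠ N in atTop,
        (∏ j ∈ Finset.range b, (S N - (j : ℝ) * ε N)) / (b.factorial : ℝ) ≤ F N := by
      have h1 : ∀ᶠ N in atTop, (b : ℝ) * ε N < lam / 2 := by
        have hbε : Tendsto (fun N => (b : ℝ) * ε N) atTop (𝓝 0) := by
          simpa only [mul_zero] using hεto0.const_mul (b : ℝ)
        exact hbε.eventually_lt_const (by positivity)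
      have h2 : ∀ᶠ N in atTop, lam / 2 < S N :=
        hS.eventually_const_lt (by linarith)
      filter_upwards [h1, h2] with N h1N h2N
      rw [div_le_iff₀ hbfac]
      have h3 : ∏ j ∈ Finset.range b, (S N - (j : ℝ) * ε N) ≤ (b.factorial : ℝ) * F N :=
        esymm_lower r (ε N) (le_of_lt (hε0 N)) b (Finset.Ico (a N) (c N))
          (fun i hi => ⟨le_of_lt (hmem N i hi).1, (hmem N i hi).2⟩)
          (show (b : ℝ) * ε N ≤ S N from le_of_lt (h1N.trans h2N))
      linarith
    have hup_lim : Tendsto (fun N => S N ^ b / (b.factorial : ℝ)) atTop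
        (𝓝 (lam ^ b / (b.factorial : ℝ))) := (hS.pow b).div_const _
    have hlo_lim : Tendsto
        (fun N => (∏ j ∈ Finset.range b, (S N - (j : ℝ) * ε N)) / (b.factorial : ℝ)) atTop
        (𝓝 (lam ^ b / (b.factorial : ℝ))) := by
      have hprod : Tendsto (fun N => ∏ j ∈ Finset.range b, (S N - (j : ℝ) * ε N)) atTop
          (𝓝 (lam ^ b)) := by
        have h1 : ∀ j ∈ Finset.range b, Tendsto (fun N => S N - (j : ℝ) * ε N) atTop (𝓝 lam) := by
          intro j _
          have := hS.sub (hεto0.const_mul (j : ℝ))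
          simpa only [mul_zero, sub_zero] using this
        have := tendsto_finset_prod (Finset.range b) h1
        simpa [Finset.prod_const, Finset.card_range] using this
      exact hprod.div_const _
    exact tendsto_of_tendsto_of_tendsto_of_le_of_le' hlo_lim hup_lim hlo
      (Filter.Eventually.of_forall hup)
end

section
/- For m = 2 the asymptotic optimal win probability and lower bound is e^{-1} + e^{-3/2}, and for m = 3 it is e^{-1} + e^{-3/2} + e^{-47/24}; numerically e^{-1} + e^{-3/2} > 0.59 and e^{-1} + e^{-3/2} + e^{-47/24} > 0.73. -/
open Finset

lemma mem_XiHat_zero (f : Fin 0 → ℕ) : f ∉ XiHat 0 := by simp [XiHat, sumFrom]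

lemma mem_XiHat_one (f : Fin 1 → ℕ) : f ∈ XiHat 1 ↔ f 0 = 1 := by
  simp only [XiHat, Set.mem_setOf_eq, sumFrom, Fin.sum_univ_one]
  constructor
  · rintro ⟨h1, h2⟩
    have := h1 1 le_rfl le_rfl
    norm_num at this ⊢
    omega
  · intro hf
    refine ⟨?_, by omega⟩
    intro k' h1 h2; interval_cases k'; norm_num; omega

lemma mem_XiHat_two (f : Fin 2 → ℕ) :
    f ∈ XiHat 2 ↔ f 1 ≤ 1 ∧ f 0 + f 1 ≤ 2 ∧ 1 ≤ f 0 + f 1 := by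
  simp only [XiHat, Set.mem_setOf_eq, sumFrom, Fin.sum_univ_two]
  constructor
  · rintro ⟨h1, h2⟩
    have e1 := h1 1 le_rfl (by norm_num)
    have e2 := h1 2 (by norm_num) le_rfl
    norm_num at e1 e2 ⊢
    omega
  · rintro ⟨ha, hb, hc⟩
    refine ⟨?_, by omega⟩
    intro k' h1 h2; interval_cases k' <;> norm_num <;> omega

lemma mem_XiHat_three (f : Fin 3 → ℕ) :
    f ∈ XiHat 3 ↔ f 2 ≤ 1 ∧ f 1 + f 2 ≤ 2 ∧ f 0 + f 1 + f 2 ≤ 3 ∧ 1 ≤ f 0 + f 1 + f 2 := by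
  simp only [XiHat, Set.mem_setOf_eq, sumFrom, Fin.sum_univ_three]
  constructor
  · rintro ⟨h1, h2⟩
    have e1 := h1 1 le_rfl (by norm_num)
    have e2 := h1 2 (by norm_num) (by norm_num)
    have e3 := h1 3 (by norm_num) le_rfl
    norm_num at e1 e2 e3 ⊢
    omega
  · rintro ⟨ha, hb, hc, hd⟩
    refine ⟨?_, by omega⟩
    intro k' h1 h2; interval_cases k' <;> norm_num <;> omega

lemma Xi_one : Xi 1 = ↑({![1]} : Finset (Fin 1 → ℕ)) := by
  ext b
  simp only [Xi, Set.mem_setOf_eq, Finset.coe_singleton, Set.mem_singleton_iff]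
  constructor
  · rintro ⟨hb, -⟩
    rw [mem_XiHat_one] at hb
    funext i; fin_cases i; simpa using hb
  · rintro rfl
    refine ⟨(mem_XiHat_one _).2 rfl, ?_⟩
    intro k' hk; interval_cases k'; exact mem_XiHat_zero _

lemma Xi_two : Xi 2 = ↑({![0,1], ![2,0]} : Finset (Fin 2 → ℕ)) := by
  ext b
  simp only [Xi, Set.mem_setOf_eq, Finset.coe_insert, Finset.coe_singleton,
    Set.mem_insert_iff, Set.mem_singleton_iff]
  constructor
  · rintro ⟨hb, ht⟩
    rw [mem_XiHat_two] at hb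
    have t1 := ht 1 (by norm_num)
    rw [mem_XiHat_one] at t1
    have t1' : ¬ (b 0 = 1) := t1
    have hd : (b 0 = 0 ∧ b 1 = 1) ∨ (b 0 = 2 ∧ b 1 = 0) := by omega
    rcases hd with ⟨h0, h1⟩ | ⟨h0, h1⟩
    · left; funext i; fin_cases i <;> simpa
    · right; funext i; fin_cases i <;> simpa
  · rintro (rfl | rfl) <;>
      refine ⟨(mem_XiHat_two _).2 (by decide), ?_⟩ <;>
      · intro k' hk; interval_cases k'
        · exact mem_XiHat_zero _
        · rw [mem_XiHat_one]; norm_num [Fin.castLE]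

lemma Xi_three : Xi 3 = ↑({![0,0,1], ![0,2,0], ![3,0,0], ![2,1,0]} : Finset (Fin 3 → ℕ)) := by
  ext b
  simp only [Xi, Set.mem_setOf_eq, Finset.coe_insert, Finset.coe_singleton,
    Set.mem_insert_iff, Set.mem_singleton_iff]
  constructor
  · rintro ⟨hb, ht⟩
    rw [mem_XiHat_three] at hb
    have t1 := ht 1 (by norm_num)
    rw [mem_XiHat_one] at t1
    have t1' : ¬ (b 0 = 1) := t1
    have t2 := ht 2 (by norm_num)
    rw [mem_XiHat_two] at t2
    have t2' : ¬ (b 1 ≤ 1 ∧ b 0 + b 1 ≤ 2 ∧ 1 ≤ b 0 + b 1) := t2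
    have hd : (b 0 = 0 ∧ b 1 = 0 ∧ b 2 = 1) ∨ (b 0 = 0 ∧ b 1 = 2 ∧ b 2 = 0) ∨
        (b 0 = 3 ∧ b 1 = 0 ∧ b 2 = 0) ∨ (b 0 = 2 ∧ b 1 = 1 ∧ b 2 = 0) := by omega
    rcases hd with ⟨h0,h1,h2⟩|⟨h0,h1,h2⟩|⟨h0,h1,h2⟩|⟨h0,h1,h2⟩
    · left; funext i; fin_cases i <;> simpa
    · right; left; funext i; fin_cases i <;> simpa
    · right; right; left; funext i; fin_cases i <;> simpa
    · right; right; right; funext i; fin_cases i <;> simpa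
  · rintro (rfl | rfl | rfl | rfl) <;>
      refine ⟨(mem_XiHat_three _).2 (by decide), ?_⟩ <;>
      · intro k' hk; interval_cases k'
        · exact mem_XiHat_zero _
        · rw [mem_XiHat_one]; norm_num [Fin.castLE]
        · rw [mem_XiHat_two]; norm_num [Fin.castLE]

lemma lam_values (lam : ℕ → ℝ) (h : eqSystem 3 lam) :
    lam 1 = 1 ∧ lam 2 = 1/2 ∧ lam 3 = 11/24 := by
  have h1 := h 1 le_rfl (by norm_num)
  have h2 := h 2 (by norm_num) (by norm_num)
  have h3 := h 3 (by norm_num) le_rfl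
  rw [Xi_one, finsum_mem_coe_finset, Finset.sum_singleton] at h1
  rw [Xi_two, finsum_mem_coe_finset, Finset.sum_insert (by decide),
    Finset.sum_singleton] at h2
  rw [Xi_three, finsum_mem_coe_finset, Finset.sum_insert (by decide),
    Finset.sum_insert (by decide), Finset.sum_insert (by decide),
    Finset.sum_singleton] at h3
  simp only [Fin.prod_univ_one, Fin.prod_univ_two, Fin.prod_univ_three] at h1 h2 h3
  norm_num [Nat.factorial] at h1 h2 h3
  rw [h1] at h2 h3
  norm_num at h2 h3
  have h2' : lam 2 = 1/2 := by linarith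
  rw [h2'] at h3
  refine ⟨h1, h2', by
    have h3' : lam 3 ^ 1 / ((Nat.factorial 1 : ℕ) : ℝ) + ((1 / 2) ^ 2 / 2 * (lam 3 ^ 0 / ((Nat.factorial 0 : ℕ) : ℝ)) +
        (1/6 * (lam 3 ^ 0 / ((Nat.factorial 0 : ℕ) : ℝ)) + 1 / 2 * (1 / 2) * (lam 3 ^ 0 / ((Nat.factorial 0 : ℕ) : ℝ)))) = 1 := h3
    norm_num at h3'; linarith⟩

/-- For `m = 2` the asymptotic optimal win probability
`∑_{k=1}^2 e^{-∑_{k'≤k} λ_{k'}}` equals `e⁻¹ + e^{-3/2}`, and for `m = 3` it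
equals `e⁻¹ + e^{-3/2} + e^{-47/24}`, where `(λ_1,λ_2,λ_3)` is the unique
positive solution of the pattern equation system; numerically
`e⁻¹ + e^{-3/2} > 0.59` and `e⁻¹ + e^{-3/2} + e^{-47/24} > 0.73`. -/
theorem asymptotic_values_two_three (lam : ℕ → ℝ) (h : eqSystem 3 lam)
    (hpos : ∀ k, 1 ≤ k → k ≤ 3 → 0 < lam k) :
    (∑ k ∈ Finset.Icc 1 2, Real.exp (-(∑ k' ∈ Finset.Icc 1 k, lam k')))
        = Real.exp (-1) + Real.exp (-(3 / 2)) ∧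
    (∑ k ∈ Finset.Icc 1 3, Real.exp (-(∑ k' ∈ Finset.Icc 1 k, lam k')))
        = Real.exp (-1) + Real.exp (-(3 / 2)) + Real.exp (-(47 / 24)) ∧
    (0.59 : ℝ) < Real.exp (-1) + Real.exp (-(3 / 2)) ∧
    (0.73 : ℝ) < Real.exp (-1) + Real.exp (-(3 / 2)) + Real.exp (-(47 / 24)) := by
  obtain ⟨l1, l2, l3⟩ := lam_values lam h
  have hIcc1 : Finset.Icc 1 1 = ({1} : Finset ℕ) := rfl
  have hIcc2 : Finset.Icc 1 2 = ({1, 2} : Finset ℕ) := rfl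
  have hIcc3 : Finset.Icc 1 3 = ({1, 2, 3} : Finset ℕ) := rfl
  have e1 : (∑ k' ∈ Finset.Icc 1 1, lam k') = 1 := by
    rw [hIcc1, Finset.sum_singleton, l1]
  have e2 : (∑ k' ∈ Finset.Icc 1 2, lam k') = 3/2 := by
    rw [hIcc2, Finset.sum_insert (by decide), Finset.sum_singleton, l1, l2]; norm_num
  have e3 : (∑ k' ∈ Finset.Icc 1 3, lam k') = 47/24 := by
    rw [hIcc3, Finset.sum_insert (by decide), Finset.sum_insert (by decide),
      Finset.sum_singleton, l1, l2, l3]; norm_num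
  have g2 : (∑ k ∈ Finset.Icc 1 2, Real.exp (-(∑ k' ∈ Finset.Icc 1 k, lam k')))
      = Real.exp (-1) + Real.exp (-(3 / 2)) := by
    rw [hIcc2, Finset.sum_insert (by decide), Finset.sum_singleton, e1, e2]
  have g3 : (∑ k ∈ Finset.Icc 1 3, Real.exp (-(∑ k' ∈ Finset.Icc 1 k, lam k')))
      = Real.exp (-1) + Real.exp (-(3 / 2)) + Real.exp (-(47 / 24)) := by
    rw [hIcc3, Finset.sum_insert (by decide), Finset.sum_insert (by decide),
      Finset.sum_singleton, e1, e2, e3, add_assoc]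
  have he : Real.exp 1 < 2.7182818286 := Real.exp_one_lt_d9
  have hepos := Real.exp_pos 1
  have b1 : (0.36787 : ℝ) < Real.exp (-1) := by
    rw [Real.exp_neg, ← one_div]
    rw [lt_div_iff₀ hepos]
    nlinarith
  have hsq : Real.exp (3/2 : ℝ) * Real.exp (3/2 : ℝ) = Real.exp 1 ^ 3 := by
    rw [← Real.exp_add, show (3/2 : ℝ) + 3/2 = (3:ℕ) * 1 by norm_num,
      Real.exp_nat_mul]
  have hcube : Real.exp 1 ^ 3 < (20.0856 : ℝ) := by
    have := pow_lt_pow_left₀ he hepos.le (n := 3) (by norm_num)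
    nlinarith [this]
  have hub : Real.exp (3/2 : ℝ) < 4.4823 := by
    nlinarith [Real.exp_pos (3/2 : ℝ), hsq, hcube]
  have b2 : (0.22305 : ℝ) < Real.exp (-(3/2) : ℝ) := by
    rw [Real.exp_neg, ← one_div, lt_div_iff₀ (Real.exp_pos _)]
    nlinarith [Real.exp_pos (3/2 : ℝ)]
  have hsq2 : Real.exp (2 : ℝ) = Real.exp 1 * Real.exp 1 := by
    rw [← Real.exp_add]; norm_num
  have hinv2 : (0.135335 : ℝ) < Real.exp (-2 : ℝ) := by
    rw [Real.exp_neg, ← one_div, lt_div_iff₀ (Real.exp_pos _)]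
    nlinarith
  have hfrac : (25/24 : ℝ) ≤ Real.exp (1/24 : ℝ) := by
    have := Real.add_one_le_exp (1/24 : ℝ)
    linarith
  have b3 : (0.1409 : ℝ) < Real.exp (-(47/24) : ℝ) := by
    have : Real.exp (-(47/24) : ℝ) = Real.exp (-2 : ℝ) * Real.exp (1/24 : ℝ) := by
      rw [← Real.exp_add]; norm_num
    rw [this]
    nlinarith [Real.exp_pos (-2 : ℝ), Real.exp_pos (1/24 : ℝ)]
  refine ⟨g2, g3, by nlinarith, by nlinarith⟩
end
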